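/- arXiv:1411.4987 — 3 statements merged into one kernel-verified Lean document; each statement's English description precedes it below -/
import Mathlib

section
/- For every Archimedean ℓu-group (G, u) there exist a unital Archimedean ℓu-ring R and an injective ℓu-group morphism ε : (G, u) → (R, 1) (a group homomorphism preserving ∨ and ∧ with ε(u) = 1) such that for every unital Archimedean ℓu-ring T and every ℓu-group morphism f : (G, u) → (T, 1) there exists a unital ℓu-ring morphism g : R → T with g ∘ ε = f. -/
universe u

/-- An Archimedean-free bundled ℓu-group: an abelian ℓ-group with monotone addition
and a distinguished strong unit `u`. -/
structure LuGroup : Type (u + 1) where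
  G : Type u
  [grp : AddCommGroup G]
  [lat : Lattice G]
  add_le_add : ∀ a b c : G, a ≤ b → c + a ≤ c + b
  u : G
  u_nonneg : 0 ≤ u
  u_strong : ∀ x : G, ∃ n : ℕ, x ≤ n • u

attribute [instance] LuGroup.grp LuGroup.lat

/-- Archimedean ℓ-group. -/
def LuGroup.Arch (L : LuGroup.{u}) : Prop :=
  ∀ x y : L.G, (∀ n : ℕ, n • x ≤ y) → x ≤ 0

/-- A unital ℓu-ring: a commutative ring with lattice order, monotone addition,
`1` a strong unit, product of positives positive, and the f-ring condition. -/
structure LuRing : Type (u + 1) where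
  R : Type u
  [ring : CommRing R]
  [lat : Lattice R]
  add_le_add : ∀ a b c : R, a ≤ b → c + a ≤ c + b
  one_nonneg : (0 : R) ≤ 1
  one_strong : ∀ x : R, ∃ n : ℕ, x ≤ n • (1 : R)
  mul_nonneg : ∀ a b : R, 0 ≤ a → 0 ≤ b → 0 ≤ a * b
  f_ring : ∀ x y z : R, x ⊓ y = 0 → 0 ≤ z → (z * x) ⊓ y = 0

attribute [instance] LuRing.ring LuRing.lat

/-- Archimedean ℓu-ring. -/
def LuRing.Arch (S : LuRing.{u}) : Prop :=
  ∀ x y : S.R, (∀ n : ℕ, n • x ≤ y) → x ≤ 0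

/-- A morphism of unital ℓu-rings: a ring homomorphism preserving `⊔` and `⊓`. -/
def LuRingHom (S T : LuRing.{u}) (f : S.R → T.R) : Prop :=
  (∀ x y, f (x + y) = f x + f y) ∧ (∀ x y, f (x * y) = f x * f y) ∧ f 1 = 1 ∧
  (∀ x y, f (x ⊔ y) = f x ⊔ f y) ∧ (∀ x y, f (x ⊓ y) = f x ⊓ f y)

/-- An ℓu-group morphism from `(G, u)` to an ℓu-ring `(R, 1)`: a group homomorphism
preserving `⊔` and `⊓` and sending `u` to `1`. -/
def LuGroupRingHom (L : LuGroup.{u}) (S : LuRing.{u}) (f : L.G → S.R) : Prop :=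
  (∀ x y, f (x + y) = f x + f y) ∧ (∀ x y, f (x ⊔ y) = f x ⊔ f y) ∧
  (∀ x y, f (x ⊓ y) = f x ⊓ f y) ∧ f L.u = 1




section LatticeGroupAux
variable {α : Type*} [AddCommGroup α] [Lattice α] [CovariantClass α α (· + ·) (· ≤ ·)]

lemma lga_neg_le_neg {a b : α} (h : a ≤ b) : -b ≤ -a := by
  have h2 := add_le_add_right h (-a + -b)
  calc -b = (-a + -b) + a := by abel
    _ ≤ (-a + -b) + b := h2
    _ = -a := by abel

lemma lga_neg_le' {a b : α} (h : -a ≤ b) : -b ≤ a := by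
  have h2 := lga_neg_le_neg h
  rwa [neg_neg] at h2

lemma lga_posPart_add_le (a b : α) : (a + b)⁺ ≤ a⁺ + b⁺ := by
  rw [posPart_def]
  exact sup_le (add_le_add (le_posPart a) (le_posPart b))
    (add_nonneg (posPart_nonneg a) (posPart_nonneg b))

lemma lga_half {x y : α} (h : x + x ≤ y + y) : x ≤ y := by
  set z := x - y with hz
  have h2 : z + z ≤ 0 := by
    have : x + x - (y + y) ≤ 0 := sub_nonpos.2 h
    calc z + z = x + x - (y + y) := by rw [hz]; abel
    _ ≤ 0 := this
  have key : z⁺ + z⁺ ≤ z⁺ := by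
    have A : z + (z ⊔ 0) ≤ z⁺ := by
      rw [add_sup z 0 z]
      exact sup_le (h2.trans (posPart_nonneg z)) (by rw [add_zero]; exact le_posPart z)
    have B : (0 : α) + (z ⊔ 0) ≤ z⁺ := by
      rw [zero_add, ← posPart_def]
    have e1 : z⁺ + z⁺ = (z + (z ⊔ 0)) ⊔ ((0 : α) + (z ⊔ 0)) := by
      rw [posPart_def, ← sup_add z 0 (z ⊔ 0)]
    rw [e1]
    exact sup_le A B
  have hzp : z⁺ ≤ 0 := by
    have h5 := add_le_add_left key (-z⁺)
    simpa [add_assoc] using h5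
  have : z ≤ 0 := (le_posPart z).trans hzp
  rw [hz] at this
  exact sub_nonpos.1 this

lemma lga_inf_add_inf {x y z : α} (hx : 0 ≤ x) (hy : 0 ≤ y) (hz : 0 ≤ z) :
    (x + y) ⊓ z ≤ x ⊓ z + y ⊓ z := by
  have e1 : (x + y) ⊓ z + (-x ⊔ -z) = (((x + y) ⊓ z) + -x) ⊔ (((x + y) ⊓ z) + -z) :=
    add_sup ..
  have e2 : ((x + y) ⊓ z) + -x = y ⊓ (z - x) := by
    rw [inf_add (x+y) z (-x)]
    congr 1 <;> abel
  have e3 : ((x + y) ⊓ z) + -z = (x + y - z) ⊓ 0 := by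
    rw [inf_add (x+y) z (-z)]
    congr 1 <;> abel
  have key : (x + y) ⊓ z + (-x ⊔ -z) ≤ y ⊓ z := by
    rw [e1, e2, e3]
    refine sup_le ?_ ?_
    · exact inf_le_inf_left y (sub_le_self z hx)
    · exact (inf_le_right).trans (le_inf hy hz)
  have e4 : -x ⊔ -z = -(x ⊓ z) := by rw [neg_inf]
  rw [e4] at key
  have h6 := add_le_add_left key (x ⊓ z)
  calc (x + y) ⊓ z = (x + y) ⊓ z + -(x ⊓ z) + x ⊓ z := by abel
    _ ≤ y ⊓ z + x ⊓ z := h6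
    _ = x ⊓ z + y ⊓ z := by abel

lemma lga_nsmul_inf {x z : α} (hx : 0 ≤ x) (hz : 0 ≤ z) (h : x ⊓ z = 0) (n : ℕ) :
    (n • x) ⊓ z = 0 := by
  induction n with
  | zero => simpa using inf_eq_left.2 hz
  | succ n ih =>
    refine le_antisymm ?_ (le_inf (nsmul_nonneg hx _) hz)
    have : ((n • x) + x) ⊓ z ≤ (n • x) ⊓ z + x ⊓ z :=
      lga_inf_add_inf (nsmul_nonneg hx n) hx hz
    rw [ih, h, add_zero] at this
    rw [succ_nsmul]
    exact this

end LatticeGroupAux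

section Holder
variable {Q : Type*} [AddCommGroup Q] [LinearOrder Q] [IsOrderedAddMonoid Q] [Archimedean Q] (e : Q) (he : 0 < e)

/-- the integer `k` with `k • e ≤ (n+1) • x < (k+1) • e`. -/
noncomputable def holderK (x : Q) (n : ℕ) : ℤ :=
  (existsUnique_zsmul_near_of_pos he (((n : ℤ) + 1) • x)).choose

lemma holderK_spec (x : Q) (n : ℕ) :
    holderK e he x n • e ≤ ((n : ℤ) + 1) • x ∧
      ((n : ℤ) + 1) • x < (holderK e he x n + 1) • e :=
  (existsUnique_zsmul_near_of_pos he (((n : ℤ) + 1) • x)).choose_spec.1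

lemma holderK_max (x : Q) (n : ℕ) {k : ℤ} (h : k • e ≤ ((n : ℤ) + 1) • x) :
    k ≤ holderK e he x n := by
  have h2 := (holderK_spec e he x n).2
  have : k • e < (holderK e he x n + 1) • e := lt_of_le_of_lt h h2
  have := (zsmul_lt_zsmul_iff_left he).1 this
  omega

lemma holderK_le_of (x : Q) (n : ℕ) {k : ℤ} (h : ((n : ℤ) + 1) • x ≤ k • e) :
    holderK e he x n ≤ k := by
  have h1 := (holderK_spec e he x n).1
  exact (zsmul_le_zsmul_iff_left he).1 (h1.trans h)

lemma holderK_mul (x : Q) (n m : ℕ) :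
    ((m : ℤ) + 1) * holderK e he x n ≤ holderK e he x (n * m + n + m) := by
  apply holderK_max
  have h1 := (holderK_spec e he x n).1
  calc (((m : ℤ) + 1) * holderK e he x n) • e
      = ((m : ℤ) + 1) • (holderK e he x n • e) := by rw [mul_zsmul]
    _ ≤ ((m : ℤ) + 1) • (((n : ℤ) + 1) • x) := by
        apply zsmul_le_zsmul_right (by positivity) h1
    _ = (((n * m + n + m : ℕ) : ℤ) + 1) • x := by
        rw [← mul_zsmul]
        congr 1
        push_cast
        ring

lemma holderK_add_le (x y : Q) (n : ℕ) :
    holderK e he x n + holderK e he y n ≤ holderK e he (x + y) n := by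
  apply holderK_max
  rw [add_zsmul, smul_add]
  exact add_le_add (holderK_spec e he x n).1 (holderK_spec e he y n).1

lemma holderK_le_add (x y : Q) (n : ℕ) :
    holderK e he (x + y) n ≤ holderK e he x n + holderK e he y n + 1 := by
  have h1 := (holderK_spec e he (x + y) n).1
  have h2 := (holderK_spec e he x n).2
  have h3 := (holderK_spec e he y n).2
  have : holderK e he (x + y) n • e < (holderK e he x n + 1 + (holderK e he y n + 1)) • e := by
    calc holderK e he (x + y) n • e ≤ ((n : ℤ) + 1) • (x + y) := h1
      _ = ((n : ℤ) + 1) • x + ((n : ℤ) + 1) • y := smul_add ..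
      _ < (holderK e he x n + 1) • e + (holderK e he y n + 1) • e :=
          add_lt_add h2 h3
      _ = (holderK e he x n + 1 + (holderK e he y n + 1)) • e := (add_zsmul ..).symm
  have := (zsmul_lt_zsmul_iff_left he).1 this
  omega

lemma holderK_mono {x y : Q} (h : x ≤ y) (n : ℕ) :
    holderK e he x n ≤ holderK e he y n := by
  apply holderK_max
  exact (holderK_spec e he x n).1.trans (zsmul_le_zsmul_right (by positivity) h)

/-- the Hölder real associated to `x`. -/
noncomputable def holderPhi (x : Q) : ℝ :=
  sSup (Set.range fun n : ℕ => ((holderK e he x n : ℝ) / ((n : ℝ) + 1)))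

lemma holderPhi_bdd (x : Q) : BddAbove (Set.range fun n : ℕ =>
    ((holderK e he x n : ℝ) / ((n : ℝ) + 1))) := by
  obtain ⟨m, hm⟩ := Archimedean.arch x he
  refine ⟨(m : ℝ), ?_⟩
  rintro r ⟨n, rfl⟩
  have hK : holderK e he x n ≤ ((n : ℤ) + 1) * m := by
    apply holderK_le_of
    calc ((n : ℤ) + 1) • x ≤ ((n : ℤ) + 1) • (m • e) := zsmul_le_zsmul_right (by positivity) hm
      _ = ((n : ℤ) + 1) • ((m : ℤ) • e) := by rw [natCast_zsmul]
      _ = (((n : ℤ) + 1) * (m : ℤ)) • e := (mul_zsmul ..).symm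
  have hn : (0 : ℝ) < (n : ℝ) + 1 := by positivity
  rw [div_le_iff₀ hn]
  calc (holderK e he x n : ℝ) ≤ ((n : ℝ) + 1) * m := by exact_mod_cast hK
    _ = (m : ℝ) * ((n : ℝ) + 1) := by ring

lemma holderPhi_mem_le (x : Q) (n : ℕ) :
    (holderK e he x n : ℝ) / ((n : ℝ) + 1) ≤ holderPhi e he x :=
  le_csSup (holderPhi_bdd e he x) ⟨n, rfl⟩

lemma holderPhi_le (x : Q) {c : ℝ}
    (h : ∀ n : ℕ, (holderK e he x n : ℝ) / ((n : ℝ) + 1) ≤ c) : holderPhi e he x ≤ c := by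
  unfold holderPhi
  apply csSup_le
  · exact ⟨_, ⟨0, rfl⟩⟩
  · rintro r ⟨n, rfl⟩
    exact h n

/-- comparison along refinement of denominators -/
lemma holderPhi_step (x : Q) (n m : ℕ) :
    (holderK e he x n : ℝ) / ((n : ℝ) + 1) ≤
      (holderK e he x (n * m + n + m) : ℝ) / (((n * m + n + m : ℕ) : ℝ) + 1) := by
  have h := holderK_mul e he x n m
  have hn : (0 : ℝ) < (n : ℝ) + 1 := by positivity
  have hD : (0 : ℝ) < ((n * m + n + m : ℕ) : ℝ) + 1 := by positivity
  rw [div_le_div_iff₀ hn hD]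
  have hcast : (((n * m + n + m : ℕ) : ℝ) + 1) = ((n : ℝ) + 1) * ((m : ℝ) + 1) := by
    push_cast; ring
  rw [hcast]
  have h' : ((m : ℝ) + 1) * (holderK e he x n : ℝ) ≤ (holderK e he x (n * m + n + m) : ℝ) := by
    exact_mod_cast h
  calc (holderK e he x n : ℝ) * (((n : ℝ) + 1) * ((m : ℝ) + 1))
      = (((m : ℝ) + 1) * (holderK e he x n : ℝ)) * ((n : ℝ) + 1) := by ring
    _ ≤ (holderK e he x (n * m + n + m) : ℝ) * ((n : ℝ) + 1) := by
        apply mul_le_mul_of_nonneg_right h' hn.le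

lemma holderPhi_mono {x y : Q} (h : x ≤ y) : holderPhi e he x ≤ holderPhi e he y := by
  apply holderPhi_le
  intro n
  refine le_trans ?_ (holderPhi_mem_le e he y n)
  have h2 : (holderK e he x n : ℝ) ≤ (holderK e he y n : ℝ) := by
    exact_mod_cast holderK_mono e he h n
  gcongr

lemma holderPhi_add (x y : Q) :
    holderPhi e he (x + y) = holderPhi e he x + holderPhi e he y := by
  apply le_antisymm
  · -- φ(x+y) ≤ φ x + φ y
    apply holderPhi_le
    intro n
    apply le_of_forall_sub_le
    intro ε hε
    rw [sub_le_iff_le_add]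
    obtain ⟨m, hm⟩ := exists_nat_gt (1 / ε)
    set N := n * m + n + m with hN
    have hstep := holderPhi_step e he (x + y) n m
    have hsplit := holderK_le_add e he x y N
    have hDpos : (0 : ℝ) < ((N : ℕ) : ℝ) + 1 := by positivity
    have key : (holderK e he (x + y) N : ℝ) / (((N : ℕ) : ℝ) + 1) ≤
        holderPhi e he x + holderPhi e he y + 1 / (((N : ℕ) : ℝ) + 1) := by
      have h1 : (holderK e he (x + y) N : ℝ) ≤
          (holderK e he x N : ℝ) + (holderK e he y N : ℝ) + 1 := by exact_mod_cast hsplit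
      calc (holderK e he (x + y) N : ℝ) / (((N : ℕ) : ℝ) + 1)
          ≤ ((holderK e he x N : ℝ) + (holderK e he y N : ℝ) + 1) / (((N : ℕ) : ℝ) + 1) := by
            gcongr
        _ = (holderK e he x N : ℝ) / (((N : ℕ) : ℝ) + 1)
              + (holderK e he y N : ℝ) / (((N : ℕ) : ℝ) + 1) + 1 / (((N : ℕ) : ℝ) + 1) := by
            ring
        _ ≤ holderPhi e he x + holderPhi e he y + 1 / (((N : ℕ) : ℝ) + 1) := by
            gcongr
            · exact holderPhi_mem_le e he x N
            · exact holderPhi_mem_le e he y N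
    have hsmall : 1 / (((N : ℕ) : ℝ) + 1) ≤ ε := by
      rw [div_le_iff₀ hDpos]
      have hmN : (m : ℝ) ≤ ((N : ℕ) : ℝ) + 1 := by
        have : (m : ℕ) ≤ N + 1 := by omega
        exact_mod_cast this
      have h3 : 1 / ε < ((N : ℕ) : ℝ) + 1 := lt_of_lt_of_le hm hmN
      have h5 : (1 : ℝ) < (((N : ℕ) : ℝ) + 1) * ε := (div_lt_iff₀ hε).1 h3
      nlinarith [h5]
    calc (holderK e he (x + y) n : ℝ) / ((n : ℝ) + 1)
        ≤ (holderK e he (x + y) N : ℝ) / (((N : ℕ) : ℝ) + 1) := hstep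
      _ ≤ holderPhi e he x + holderPhi e he y + 1 / (((N : ℕ) : ℝ) + 1) := key
      _ ≤ holderPhi e he x + holderPhi e he y + ε := by gcongr
  · -- φ x + φ y ≤ φ (x+y)
    rw [← le_sub_iff_add_le]
    apply holderPhi_le
    intro n
    rw [le_sub_iff_add_le, add_comm, ← le_sub_iff_add_le]
    apply holderPhi_le
    intro m
    rw [le_sub_iff_add_le]
    set N := n * m + n + m with hN
    have hx' : (holderK e he x n : ℝ) / ((n : ℝ) + 1) ≤
        (holderK e he x N : ℝ) / (((N : ℕ) : ℝ) + 1) := holderPhi_step e he x n m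
    have hy' : (holderK e he y m : ℝ) / ((m : ℝ) + 1) ≤
        (holderK e he y N : ℝ) / (((N : ℕ) : ℝ) + 1) := by
      have h0 : m * n + m + n = N := by rw [hN]; ring
      have := holderPhi_step e he y m n
      rwa [h0] at this
    have hDpos : (0 : ℝ) < ((N : ℕ) : ℝ) + 1 := by positivity
    calc (holderK e he y m : ℝ) / ((m : ℝ) + 1) + (holderK e he x n : ℝ) / ((n : ℝ) + 1)
        ≤ (holderK e he y N : ℝ) / (((N : ℕ) : ℝ) + 1)
            + (holderK e he x N : ℝ) / (((N : ℕ) : ℝ) + 1) := add_le_add hy' hx'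
      _ = ((holderK e he x N : ℝ) + (holderK e he y N : ℝ)) / (((N : ℕ) : ℝ) + 1) := by
            ring
      _ ≤ (holderK e he (x + y) N : ℝ) / (((N : ℕ) : ℝ) + 1) := by
            gcongr
            exact_mod_cast holderK_add_le e he x y N
      _ ≤ holderPhi e he (x + y) := holderPhi_mem_le e he (x + y) N


lemma holderK_e (n : ℕ) : holderK e he e n = (n : ℤ) + 1 := by
  apply le_antisymm
  · exact holderK_le_of e he e n le_rfl
  · exact holderK_max e he e n le_rfl

lemma holderPhi_e : holderPhi e he e = 1 := by
  apply le_antisymm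
  · apply holderPhi_le
    intro n
    rw [holderK_e]
    have hn : (0 : ℝ) < (n : ℝ) + 1 := by positivity
    rw [div_le_one hn]
    push_cast
    exact le_rfl
  · have := holderPhi_mem_le e he e 0
    rw [holderK_e] at this
    norm_num at this
    exact this

lemma holderPhi_pos {x : Q} (hx : 0 < x) : 0 < holderPhi e he x := by
  obtain ⟨n, hn⟩ := Archimedean.arch e hx
  have hn1 : 1 ≤ n := by
    by_contra hc
    interval_cases n
    · simp at hn
      exact absurd hn (not_le.2 he)
  set m := n - 1 with hm
  have hmn : m + 1 = n := by omega
  have hK : 1 ≤ holderK e he x m := by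
    apply holderK_max
    rw [one_zsmul]
    calc e ≤ n • x := hn
      _ = ((m : ℤ) + 1) • x := by
          rw [← natCast_zsmul]
          congr 1
          omega
  calc (0 : ℝ) < 1 / ((m : ℝ) + 1) := by positivity
    _ ≤ (holderK e he x m : ℝ) / ((m : ℝ) + 1) := by
        gcongr
        exact_mod_cast hK
    _ ≤ holderPhi e he x := holderPhi_mem_le e he x m

lemma holderPhi_zero : holderPhi e he 0 = 0 := by
  have h := holderPhi_add e he 0 0
  rw [add_zero] at h
  linarith

end Holder


section SectionA2
variable {α : Type*} [AddCommGroup α] [Lattice α] [CovariantClass α α (· + ·) (· ≤ ·)]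

lemma lga_add_inf_add {A B C D : α} (hA : 0 ≤ A) (hC : 0 ≤ C) :
    (A + B) ⊓ (C + D) ≤ (A + C) + (B ⊓ D) := by
  have h1 : A + B ≤ (A + C) + B := by
    have := add_le_add_right (add_le_add_left hC A) B
    simpa [add_assoc, add_zero] using this
  have h2 : C + D ≤ (A + C) + D := by
    have := add_le_add_left (add_le_add_left hA C) D
    calc C + D = 0 + C + D := by abel
      _ ≤ A + C + D := this
  calc (A + B) ⊓ (C + D) ≤ ((A + C) + B) ⊓ ((A + C) + D) := inf_le_inf h1 h2
    _ = (A + C) + (B ⊓ D) := (add_inf B D (A + C)).symm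

end SectionA2

/-- The covariance instance for the group of an `LuGroup`. -/
instance luGroupCovariant (L : LuGroup.{u}) :
    CovariantClass L.G L.G (· + ·) (· ≤ ·) :=
  ⟨fun c a b h => L.add_le_add a b c h⟩

/-- The covariance instance for the ring of an `LuRing`. -/
instance luRingCovariant (T : LuRing.{u}) :
    CovariantClass T.R T.R (· + ·) (· ≤ ·) :=
  ⟨fun c a b h => T.add_le_add a b c h⟩

/-- Yosida-type separation: every Archimedean ℓu-group admits enough lattice
morphisms to `ℝ`. -/
theorem lu_separation (L : LuGroup.{u}) (hL : L.Arch) {x : L.G} (hx : 0 < x) :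
    ∃ φ : L.G → ℝ, (∀ a b, φ (a + b) = φ a + φ b) ∧
      (∀ a b, φ (a ⊔ b) = φ a ⊔ φ b) ∧
      (∀ a b, φ (a ⊓ b) = φ a ⊓ φ b) ∧ φ L.u = 1 ∧ 0 < φ x := by
  classical
  have hu0 : (0 : L.G) ≤ L.u := L.u_nonneg
  have hn' : ¬ ∀ n : ℕ, n • x ≤ L.u := fun h => (hx.not_ge (hL x L.u h))
  push_neg at hn'
  obtain ⟨n, hn⟩ := hn'
  set y := (L.u - n • x)⁺ with hy
  have hy0 : (0 : L.G) ≤ y := posPart_nonneg _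
  -- the ideal generated by `y` is proper
  have hproper : ∀ k : ℕ, ¬ (L.u ≤ k • y) := by
    intro k hk
    set s := L.u - n • x with hs
    have hsneg : s⁻ ≤ n • x := by
      have h1 : s⁻ = (n • x - L.u)⁺ := by
        rw [negPart_def, posPart_def]
        congr 1
        rw [hs]; abel
      rw [h1]
      calc (n • x - L.u)⁺ ≤ (n • x)⁺ := posPart_mono (sub_le_self _ hu0)
        _ = n • x := posPart_of_nonneg (nsmul_nonneg hx.le n)
    obtain ⟨m, hm⟩ := L.u_strong (n • x)
    have h2 : n • x ≤ (m * k) • s⁺ := by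
      calc n • x ≤ m • L.u := hm
        _ ≤ m • (k • y) := nsmul_le_nsmul_right hk m
        _ = (m * k) • s⁺ := by
              rw [hy, mul_nsmul]
              exact smul_comm m k s⁺
    have hdisj : s⁺ ⊓ s⁻ = 0 := posPart_inf_negPart_eq_zero s
    have h3 : ((m * k) • s⁺) ⊓ s⁻ = 0 :=
      lga_nsmul_inf (posPart_nonneg s) (negPart_nonneg s) hdisj (m * k)
    have h4 : s⁻ = 0 := by
      have h5 : s⁻ ≤ (m * k) • s⁺ := hsneg.trans h2
      have h6 : s⁻ = ((m * k) • s⁺) ⊓ s⁻ := by rw [inf_comm]; exact (inf_eq_left.2 h5).symm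
      rw [h6, h3]
    have h7 : 0 ≤ s := by
      have h8 := posPart_sub_negPart s
      rw [h4, sub_zero] at h8
      rw [← h8]; exact posPart_nonneg s
    exact hn (by rwa [hs, sub_nonneg] at h7)
  -- ideals
  set Idl : Set L.G → Prop := fun S =>
    (0 : L.G) ∈ S ∧ (∀ a ∈ S, ∀ b ∈ S, a + b ∈ S) ∧
      (∀ a ∈ S, ∀ b : L.G, |b| ≤ |a| → b ∈ S) with hIdl
  have Idl_neg : ∀ S, Idl S → ∀ a ∈ S, -a ∈ S := fun S hS a ha =>
    hS.2.2 a ha (-a) (by rw [abs_neg])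
  have Idl_nsmul : ∀ S, Idl S → ∀ a ∈ S, ∀ k : ℕ, k • a ∈ S := by
    intro S hS a ha k
    induction k with
    | zero => simpa using hS.1
    | succ k ih =>
      rw [succ_nsmul]
      exact hS.2.1 _ ih _ ha
  set S0 : Set L.G := {z | ∃ k : ℕ, |z| ≤ k • y} with hS0def
  have hS0 : Idl S0 := by
    refine ⟨⟨0, by simp⟩, ?_, ?_⟩
    · rintro a ⟨k, hk⟩ b ⟨l, hl⟩
      exact ⟨k + l, (abs_add_le a b).trans (by rw [add_nsmul]; exact add_le_add hk hl)⟩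
    · rintro a ⟨k, hk⟩ b hb
      exact ⟨k, hb.trans hk⟩
  have hyS0 : y ∈ S0 := ⟨1, by rw [abs_of_nonneg hy0, one_nsmul]⟩
  have huS0 : L.u ∉ S0 := by
    rintro ⟨k, hk⟩
    rw [abs_of_nonneg hu0] at hk
    exact hproper k hk
  -- Zorn
  set Fam : Set (Set L.G) := {S | Idl S ∧ y ∈ S ∧ L.u ∉ S} with hFam
  obtain ⟨M, hM0sub, hMmax⟩ := zorn_subset_nonempty Fam
    (by
      intro c hcsub hchain hcne
      obtain ⟨W, hW⟩ := hcne
      refine ⟨⋃₀ c, ⟨⟨?_, ?_, ?_⟩, ?_, ?_⟩, fun s hs => Set.subset_sUnion_of_mem hs⟩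
      · exact ⟨W, hW, (hcsub hW).1.1⟩
      · rintro a ⟨Sa, hSa, haSa⟩ b ⟨Sb, hSb, hbSb⟩
        rcases hchain.total hSa hSb with h | h
        · exact ⟨Sb, hSb, (hcsub hSb).1.2.1 a (h haSa) b hbSb⟩
        · exact ⟨Sa, hSa, (hcsub hSa).1.2.1 a haSa b (h hbSb)⟩
      · rintro a ⟨Sa, hSa, haSa⟩ b hb
        exact ⟨Sa, hSa, (hcsub hSa).1.2.2 a haSa b hb⟩
      · exact ⟨W, hW, (hcsub hW).2.1⟩
      · rintro ⟨Sa, hSa, haSa⟩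
        exact (hcsub hSa).2.2 haSa)
    S0 ⟨hS0, hyS0, huS0⟩
  obtain ⟨hMidl, hyM, huM⟩ := hMmax.prop
  -- maximality property
  have hmaxp : ∀ p : L.G, 0 ≤ p → p ∉ M → ∃ m ∈ M, 0 ≤ m ∧ ∃ k : ℕ, L.u ≤ m + k • p := by
    intro p hp hpM
    set M' : Set L.G := {z | ∃ m ∈ M, 0 ≤ m ∧ ∃ k : ℕ, |z| ≤ m + k • p} with hM'def
    have hMsubM' : M ⊆ M' := fun z hz =>
      ⟨|z|, hMidl.2.2 z hz _ (by rw [abs_abs]), abs_nonneg z, 0, by simp⟩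
    have hpM' : p ∈ M' :=
      ⟨0, hMidl.1, le_rfl, 1, by rw [abs_of_nonneg hp, one_nsmul, zero_add]⟩
    have hM'idl : Idl M' := by
      refine ⟨⟨0, hMidl.1, le_rfl, 0, by simp⟩, ?_, ?_⟩
      · rintro a ⟨m, hm, hm0, k, hk⟩ b ⟨m', hm', hm'0, k', hk'⟩
        refine ⟨m + m', hMidl.2.1 m hm m' hm', add_nonneg hm0 hm'0, k + k', ?_⟩
        calc |a + b| ≤ |a| + |b| := abs_add_le a b
          _ ≤ (m + k • p) + (m' + k' • p) := add_le_add hk hk'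
          _ = (m + m') + (k + k') • p := by rw [add_nsmul]; abel
      · rintro a ⟨m, hm, hm0, k, hk⟩ b hb
        exact ⟨m, hm, hm0, k, hb.trans hk⟩
    by_cases huM' : L.u ∈ M'
    · obtain ⟨m, hm, hm0, k, hk⟩ := huM'
      exact ⟨m, hm, hm0, k, by rwa [abs_of_nonneg hu0] at hk⟩
    · exfalso
      have hfam' : M' ∈ Fam := ⟨hM'idl, hMsubM' hyM, huM'⟩
      have := hMmax.2 hfam' hMsubM'
      exact hpM (this hpM')
  -- x ∉ M
  have hxM : x ∉ M := by
    intro hxMem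
    have h1 : L.u ≤ y + n • x := by
      have h2 := le_posPart (L.u - n • x)
      rw [← hy] at h2
      calc L.u = (L.u - n • x) + n • x := by abel
        _ ≤ y + n • x := add_le_add_left h2 _
    have h2 : y + n • x ∈ M := hMidl.2.1 y hyM _ (Idl_nsmul M hMidl x hxMem n)
    have h3 : |L.u| ≤ |y + n • x| := by
      rw [abs_of_nonneg hu0, abs_of_nonneg (add_nonneg hy0 (nsmul_nonneg hx.le n))]
      exact h1
    exact huM (hMidl.2.2 _ h2 _ h3)
  -- quotient
  set Msub : AddSubgroup L.G :=
    { carrier := M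
      zero_mem' := hMidl.1
      add_mem' := fun {a b} ha hb => hMidl.2.1 a ha b hb
      neg_mem' := fun {a} ha => Idl_neg M hMidl a ha } with hMsub
  let Qt := L.G ⧸ Msub
  let π : L.G →+ Qt := QuotientAddGroup.mk' Msub
  have hπsur : Function.Surjective π := QuotientAddGroup.mk'_surjective Msub
  have hπeq : ∀ a b : L.G, π a = π b ↔ a - b ∈ M := by
    intro a b
    rw [QuotientAddGroup.mk'_eq_mk']
    constructor
    · rintro ⟨z, hz, rfl⟩
      simpa using Idl_neg M hMidl z hz
    · intro h
      exact ⟨-(a - b), Idl_neg M hMidl _ h, by abel⟩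
  letI : LE Qt := ⟨fun A B => ∃ a b : L.G, π a = A ∧ π b = B ∧ (a - b)⁺ ∈ M⟩
  have le_mk : ∀ a b : L.G, (π a ≤ π b) ↔ (a - b)⁺ ∈ M := by
    intro a b
    constructor
    · rintro ⟨a', b', ha', hb', h⟩
      have haa' : a' - a ∈ M := (hπeq a' a).1 ha'
      have hbb' : b' - b ∈ M := (hπeq b' b).1 hb'
      have hd : |(a - b)⁺ - (a' - b')⁺| ≤ |(a - b) - (a' - b')| := by
        rw [posPart_def, posPart_def]
        exact abs_sup_sub_sup_le_abs _ _ 0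
      have hmem : (a - b) - (a' - b') ∈ M := by
        have heq : (a - b) - (a' - b') = -(a' - a) + (b' - b) := by abel
        rw [heq]
        exact hMidl.2.1 _ (Idl_neg M hMidl _ haa') _ hbb'
      have hdM : (a - b)⁺ - (a' - b')⁺ ∈ M := hMidl.2.2 _ hmem _ hd
      have heq2 : (a - b)⁺ = (a' - b')⁺ + ((a - b)⁺ - (a' - b')⁺) := by abel
      rw [heq2]
      exact hMidl.2.1 _ h _ hdM
    · intro h
      exact ⟨a, b, rfl, rfl, h⟩
  have le_total' : ∀ A B : Qt, A ≤ B ∨ B ≤ A := by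
    intro A B
    obtain ⟨a, rfl⟩ := hπsur A
    obtain ⟨b, rfl⟩ := hπsur B
    rw [le_mk, le_mk]
    by_contra hc
    push_neg at hc
    obtain ⟨h1, h2⟩ := hc
    have hq : (b - a)⁺ = (a - b)⁻ := by
      rw [negPart_def, posPart_def]
      congr 1
      abel
    obtain ⟨m, hmM, hm0, k, hk⟩ := hmaxp _ (posPart_nonneg (a - b)) h1
    obtain ⟨m', hm'M, hm'0, k', hk'⟩ := hmaxp _ (posPart_nonneg (b - a)) h2
    have hpq : (a - b)⁺ ⊓ (b - a)⁺ = 0 := by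
      rw [hq]; exact posPart_inf_negPart_eq_zero _
    have hd2 : (k • (a - b)⁺) ⊓ (k' • (b - a)⁺) = 0 := by
      have h3 : (k • (a - b)⁺) ⊓ (b - a)⁺ = 0 :=
        lga_nsmul_inf (posPart_nonneg _) (posPart_nonneg _) hpq k
      have h4 : (b - a)⁺ ⊓ (k • (a - b)⁺) = 0 := by rw [inf_comm]; exact h3
      have h5 : (k' • (b - a)⁺) ⊓ (k • (a - b)⁺) = 0 :=
        lga_nsmul_inf (posPart_nonneg _) (nsmul_nonneg (posPart_nonneg _) k) h4 k'
      rw [inf_comm]; exact h5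
    have hub : L.u ≤ m + m' := by
      have h6 : L.u ≤ (m + k • (a - b)⁺) ⊓ (m' + k' • (b - a)⁺) := le_inf hk hk'
      have h7 := h6.trans (lga_add_inf_add hm0 hm'0)
      rwa [hd2, add_zero] at h7
    have huMem : L.u ∈ M := by
      refine hMidl.2.2 _ (hMidl.2.1 m hmM m' hm'M) _ ?_
      rw [abs_of_nonneg hu0, abs_of_nonneg (add_nonneg hm0 hm'0)]
      exact hub
    exact huM huMem
  letI pre : PartialOrder Qt :=
    { le := (· ≤ ·)
      le_refl := by
        intro A
        obtain ⟨a, rfl⟩ := hπsur A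
        rw [le_mk, sub_self, posPart_zero]
        exact hMidl.1
      le_trans := by
        intro A B C hAB hBC
        obtain ⟨a, rfl⟩ := hπsur A
        obtain ⟨b, rfl⟩ := hπsur B
        obtain ⟨c, rfl⟩ := hπsur C
        rw [le_mk] at hAB hBC ⊢
        have h1 : (a - c)⁺ ≤ (a - b)⁺ + (b - c)⁺ := by
          have := lga_posPart_add_le (a - b) (b - c)
          rwa [show (a - b) + (b - c) = a - c by abel] at this
        refine hMidl.2.2 _ (hMidl.2.1 _ hAB _ hBC) _ ?_
        rw [abs_of_nonneg (posPart_nonneg _),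
          abs_of_nonneg (add_nonneg (posPart_nonneg _) (posPart_nonneg _))]
        exact h1
      le_antisymm := by
        intro A B hAB hBA
        obtain ⟨a, rfl⟩ := hπsur A
        obtain ⟨b, rfl⟩ := hπsur B
        rw [le_mk] at hAB hBA
        rw [hπeq]
        have hq : (b - a)⁺ = (a - b)⁻ := by
          rw [negPart_def, posPart_def]; congr 1; abel
        have h1 : a - b = (a - b)⁺ - (a - b)⁻ := (posPart_sub_negPart _).symm
        rw [h1, ← hq, sub_eq_add_neg]
        exact hMidl.2.1 _ hAB _ (Idl_neg M hMidl _ hBA) }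
  letI lin : LinearOrder Qt :=
    { pre with
      le_total := le_total'
      toDecidableLE := Classical.decRel _ }
  letI : IsOrderedAddMonoid Qt :=
    { add_le_add_left := by
        intro A B h C
        obtain ⟨a, rfl⟩ := hπsur A
        obtain ⟨b, rfl⟩ := hπsur B
        obtain ⟨c, rfl⟩ := hπsur C
        rw [← map_add, ← map_add, le_mk]
        rw [le_mk] at h
        rwa [show (a + c) - (b + c) = a - b by abel] }
  have hπmono : ∀ a b : L.G, a ≤ b → π a ≤ π b := by
    intro a b h
    rw [le_mk, posPart_eq_zero.2 (sub_nonpos.2 h)]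
    exact hMidl.1
  have hπnotle : ∀ a b : L.G, π a ≤ π b → ¬ ((a - b)⁺ ∈ M) → False := fun a b h hn2 =>
    hn2 ((le_mk a b).1 h)
  have hsupmk : ∀ a b : L.G, π (a ⊔ b) = π a ⊔ π b := by
    intro a b
    rcases le_total (π a) (π b) with h | h
    · rw [sup_eq_right.2 h, hπeq]
      have heq3 : a ⊔ b - b = (a - b)⁺ := by
        rw [sub_eq_add_neg, sup_add a b (-b), posPart_def]
        congr 1 <;> abel
      rw [heq3]
      exact (le_mk a b).1 h
    · rw [sup_eq_left.2 h, hπeq]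
      have heq3 : a ⊔ b - a = (b - a)⁺ := by
        rw [sub_eq_add_neg, sup_add a b (-a), posPart_def, sup_comm (a + -a) (b + -a)]
        congr 1 <;> abel
      rw [heq3]
      exact (le_mk b a).1 h
  have hinfmk : ∀ a b : L.G, π (a ⊓ b) = π a ⊓ π b := by
    intro a b
    rcases le_total (π a) (π b) with h | h
    · rw [inf_eq_left.2 h, hπeq]
      have heq3 : a ⊓ b - a = -((a - b)⁺) := by
        rw [sub_eq_add_neg, inf_add a b (-a), posPart_def, neg_sup, neg_sub, neg_zero,
          inf_comm (a + -a) (b + -a)]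
        congr 1 <;> abel
      rw [heq3]
      exact Idl_neg M hMidl _ ((le_mk a b).1 h)
    · rw [inf_eq_right.2 h, hπeq]
      have heq3 : a ⊓ b - b = -((b - a)⁺) := by
        rw [sub_eq_add_neg, inf_add a b (-b), posPart_def, neg_sup, neg_sub, neg_zero]
        congr 1 <;> abel
      rw [heq3]
      exact Idl_neg M hMidl _ ((le_mk b a).1 h)
  have hπzero : π 0 = 0 := map_zero π
  have he : (0 : Qt) < π L.u := by
    have h1 : (0 : Qt) ≤ π L.u := by
      rw [← hπzero]; exact hπmono 0 L.u hu0
    refine lt_of_le_of_ne h1 ?_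
    intro hq
    apply huM
    have : L.u - 0 ∈ M := (hπeq L.u 0).1 (by rw [hπzero, ← hq])
    simpa using this
  letI : Archimedean Qt := by
    constructor
    intro A B hB
    by_contra hc
    push_neg at hc
    have hall : ∀ k : ℕ, k • B ≤ A := fun k => (hc k).le
    obtain ⟨a, ha⟩ := hπsur A
    obtain ⟨N, hN⟩ := L.u_strong a
    have hNu : A ≤ (N + 1) • π L.u := by
      rw [← ha, ← map_nsmul]
      exact hπmono _ _ (hN.trans (nsmul_le_nsmul_left hu0 (Nat.le_succ N)))
    have hBu : ∀ k : ℕ, k • B ≤ π L.u := by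
      intro k
      by_contra h8
      have h9 : π L.u < k • B := not_le.1 h8
      have h6 : (k * (N + 1)) • B ≤ (N + 1) • π L.u := (hall (k * (N + 1))).trans hNu
      rw [mul_nsmul] at h6
      have h10 : (0 : Qt) < k • B - π L.u := sub_pos.2 h9
      have h11 : (0 : Qt) < (N + 1) • (k • B - π L.u) := nsmul_pos h10 (Nat.succ_ne_zero N)
      rw [nsmul_sub] at h11
      have h12 : (N + 1) • π L.u < (N + 1) • (k • B) := sub_pos.1 h11
      exact absurd h6 (not_le.2 h12)
    obtain ⟨b, hb⟩ := hπsur B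
    have hbplusM : b⁺ ∉ M := by
      intro hmem
      have hle : π b ≤ π 0 := by
        rw [le_mk]
        simpa using hmem
      rw [hπzero, hb] at hle
      exact absurd hB (not_lt.2 hle)
    obtain ⟨m, hmM, hm0, k, hk⟩ := hmaxp b⁺ (posPart_nonneg b) hbplusM
    have hkpos : k ≠ 0 := by
      rintro rfl
      rw [zero_nsmul, add_zero] at hk
      exact huM (hMidl.2.2 m hmM L.u
        (by rw [abs_of_nonneg hu0, abs_of_nonneg hm0]; exact hk))
    have hπbp : π (b⁺) = B := by
      have h1 : π (b⁺) = π b ⊔ π 0 := by rw [posPart_def, hsupmk]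
      rw [hπzero, hb, sup_eq_left.2 hB.le] at h1
      exact h1
    have hw : ((2 * k) • b⁺ - L.u)⁺ ∈ M := by
      have h2 : (2 * k) • B ≤ π L.u := hBu (2 * k)
      have h3 : π ((2 * k) • b⁺) ≤ π L.u := by
        rw [map_nsmul, hπbp]; exact h2
      exact (le_mk _ _).1 h3
    set w := ((2 * k) • b⁺ - L.u)⁺ with hwdef
    have hw0 : (0 : L.G) ≤ w := posPart_nonneg _
    have h4 : (2 * k) • b⁺ ≤ L.u + w := by
      have h5 := le_posPart ((2 * k) • b⁺ - L.u)
      rw [← hwdef] at h5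
      calc (2 * k) • b⁺ = ((2 * k) • b⁺ - L.u) + L.u := by abel
        _ ≤ w + L.u := add_le_add_left h5 _
        _ = L.u + w := add_comm _ _
    have h5 : k • b⁺ ≤ m + w := by
      have h6 : k • b⁺ + k • b⁺ ≤ (m + w) + k • b⁺ := by
        calc k • b⁺ + k • b⁺ = (2 * k) • b⁺ := by rw [two_mul, add_nsmul]
          _ ≤ L.u + w := h4
          _ ≤ (m + k • b⁺) + w := add_le_add_left hk w
          _ = (m + w) + k • b⁺ := by abel
      exact le_of_add_le_add_right h6
    have h8 : k • b⁺ ∈ M := by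
      refine hMidl.2.2 _ (hMidl.2.1 m hmM w hw) _ ?_
      rw [abs_of_nonneg (nsmul_nonneg (posPart_nonneg b) k),
        abs_of_nonneg (add_nonneg hm0 hw0)]
      exact h5
    have h9 : b⁺ ∈ M := by
      refine hMidl.2.2 _ h8 _ ?_
      rw [abs_of_nonneg (posPart_nonneg b),
        abs_of_nonneg (nsmul_nonneg (posPart_nonneg b) k)]
      calc b⁺ = 1 • b⁺ := (one_nsmul _).symm
        _ ≤ k • b⁺ := nsmul_le_nsmul_left (posPart_nonneg b) (Nat.one_le_iff_ne_zero.2 hkpos)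
    exact hbplusM h9
  -- conclude via Hölder
  refine ⟨fun a => holderPhi (π L.u) he (π a), ?_, ?_, ?_, ?_, ?_⟩
  · intro a b
    dsimp only
    rw [map_add, holderPhi_add]
  · intro a b
    dsimp only
    rw [hsupmk]
    rcases le_total (π a) (π b) with h | h
    · rw [sup_eq_right.2 h, sup_eq_right.2 (holderPhi_mono _ he h)]
    · rw [sup_eq_left.2 h, sup_eq_left.2 (holderPhi_mono _ he h)]
  · intro a b
    dsimp only
    rw [hinfmk]
    rcases le_total (π a) (π b) with h | h
    · rw [inf_eq_left.2 h, inf_eq_left.2 (holderPhi_mono _ he h)]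
    · rw [inf_eq_right.2 h, inf_eq_right.2 (holderPhi_mono _ he h)]
  · dsimp only
    exact holderPhi_e _ he
  · dsimp only
    have hπx : (0 : Qt) < π x := by
      refine lt_of_le_of_ne (by rw [← hπzero]; exact hπmono 0 x hx.le) ?_
      intro hq
      apply hxM
      have hxmem : x - 0 ∈ M := (hπeq x 0).1 (by rw [hπzero, ← hq])
      simpa using hxmem
    exact holderPhi_pos _ he hπx

/-! ### The reals as a unital Archimedean ℓu-ring -/

noncomputable def realLuRing : LuRing.{u} where
  R := ULift.{u} ℝ
  add_le_add := fun a b c h => by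
    change c.down + a.down ≤ c.down + b.down
    exact add_le_add_right (show a.down ≤ b.down from h) _
  one_nonneg := by
    change (0 : ℝ) ≤ 1
    norm_num
  one_strong := fun x => by
    obtain ⟨n, hn⟩ := exists_nat_ge x.down
    refine ⟨n, ?_⟩
    change x.down ≤ (n • (1 : ULift.{u} ℝ)).down
    have h1 : (n • (1 : ULift.{u} ℝ)).down = n • (1 : ℝ) := rfl
    rw [h1, nsmul_eq_mul, mul_one]
    exact hn
  mul_nonneg := fun a b ha hb => by
    change (0 : ℝ) ≤ a.down * b.down
    exact mul_nonneg ha hb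
  f_ring := fun x y z hxy hz => by
    have hx0 : (0 : ULift.{u} ℝ) ≤ x := hxy ▸ inf_le_left
    have hy0 : (0 : ULift.{u} ℝ) ≤ y := hxy ▸ inf_le_right
    rcases le_total x y with h | h
    · have hx : x = 0 := by rw [← hxy, inf_eq_left.2 h]
      rw [hx, mul_zero]
      exact inf_eq_left.2 hy0
    · have hyy : y = 0 := by rw [← hxy, inf_eq_right.2 h]
      rw [hyy]
      refine inf_eq_right.2 ?_
      change (0 : ℝ) ≤ z.down * x.down
      exact mul_nonneg hz hx0

lemma realLuRing_arch : realLuRing.{u}.Arch := by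
  intro x y h
  by_contra hc
  have hc' : (0 : ℝ) < x.down := by
    change ¬ (x.down ≤ (0 : ℝ)) at hc
    exact lt_of_not_ge hc
  obtain ⟨n, hn⟩ := Archimedean.arch y.down hc'
  have h2 := h (n + 1)
  change ((n + 1) • x).down ≤ y.down at h2
  have h3 : ((n + 1) • x).down = (n + 1) • x.down := rfl
  rw [h3, succ_nsmul] at h2
  have h4 : n • x.down + x.down ≤ n • x.down + 0 := by
    rw [add_zero]
    exact h2.trans hn
  exact absurd (le_of_add_le_add_left h4) (not_le.2 hc')

lemma up_lattice_hom : (∀ r s : ℝ, ULift.up.{u} (r ⊔ s) = ULift.up r ⊔ ULift.up s) ∧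
    (∀ r s : ℝ, ULift.up.{u} (r ⊓ s) = ULift.up r ⊓ ULift.up s) := by
  constructor
  · intro r s
    rcases le_total r s with h | h
    · rw [sup_eq_right.2 h, sup_eq_right.2 (show ULift.up.{u} r ≤ ULift.up s from h)]
    · rw [sup_eq_left.2 h, sup_eq_left.2 (show ULift.up.{u} s ≤ ULift.up r from h)]
  · intro r s
    rcases le_total r s with h | h
    · rw [inf_eq_left.2 h, inf_eq_left.2 (show ULift.up.{u} r ≤ ULift.up s from h)]
    · rw [inf_eq_right.2 h, inf_eq_right.2 (show ULift.up.{u} s ≤ ULift.up r from h)]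

/-! ### morphism basics -/

section HomBasics
variable (L : LuGroup.{u}) (T : LuRing.{u}) (f : L.G → T.R)

lemma hom_zero (hf : LuGroupRingHom L T f) : f 0 = 0 := by
  have := hf.1 0 0
  rw [add_zero] at this
  have h2 := congrArg (fun t => t - f 0) this
  simpa using h2.symm

lemma hom_neg (hf : LuGroupRingHom L T f) (a : L.G) : f (-a) = - f a := by
  have h1 := hf.1 a (-a)
  rw [add_neg_cancel, hom_zero L T f hf] at h1
  exact (neg_eq_of_add_eq_zero_right h1.symm).symm


lemma hom_nsmul (hf : LuGroupRingHom L T f) (n : ℕ) (a : L.G) : f (n • a) = n • f a := by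
  induction n with
  | zero => simpa using hom_zero L T f hf
  | succ n ih => rw [succ_nsmul, hf.1, ih, succ_nsmul]

lemma hom_mono (hf : LuGroupRingHom L T f) {a b : L.G} (h : a ≤ b) : f a ≤ f b := by
  have h1 : a ⊓ b = a := inf_eq_left.2 h
  have h2 := hf.2.2.1 a b
  rw [h1] at h2
  rw [h2]
  exact inf_le_right

end HomBasics
/-! ### auxiliary ring bounds -/

lemma lur_nsmul_one_mul (T : LuRing.{u}) (p q : ℕ) :
    (p • (1 : T.R)) * (q • (1 : T.R)) = (p * q) • (1 : T.R) := by
  rw [nsmul_eq_mul, nsmul_eq_mul, nsmul_eq_mul, mul_one, mul_one, mul_one, Nat.cast_mul]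

lemma lur_bound_mul (T : LuRing.{u}) {a b : T.R} {p q : ℕ}
    (ha1 : -(p • (1 : T.R)) ≤ a) (ha2 : a ≤ p • 1)
    (hb1 : -(q • (1 : T.R)) ≤ b) (hb2 : b ≤ q • 1) :
    a * b ≤ (p * q) • 1 := by
  have h1 : (0 : T.R) ≤ (p • (1 : T.R)) - a := sub_nonneg.2 ha2
  have h2 : (0 : T.R) ≤ (q • (1 : T.R)) + b := by
    have h := add_le_add_left hb1 (q • (1 : T.R))
    calc (0 : T.R) = -(q • (1 : T.R)) + q • (1 : T.R) := by abel
      _ ≤ b + q • (1 : T.R) := h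
      _ = q • (1 : T.R) + b := add_comm _ _
  have h3 : (0 : T.R) ≤ (q • (1 : T.R)) - b := sub_nonneg.2 hb2
  have h4 : (0 : T.R) ≤ (p • (1 : T.R)) + a := by
    have h := add_le_add_left ha1 (p • (1 : T.R))
    calc (0 : T.R) = -(p • (1 : T.R)) + p • (1 : T.R) := by abel
      _ ≤ a + p • (1 : T.R) := h
      _ = p • (1 : T.R) + a := add_comm _ _
  have h5 := T.mul_nonneg _ _ h1 h2
  have h6 := T.mul_nonneg _ _ h4 h3
  have h7 : a * b + a * b ≤
      (p • (1 : T.R)) * (q • (1 : T.R)) + (p • (1 : T.R)) * (q • (1 : T.R)) := by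
    have h8 := add_nonneg h5 h6
    have h9 : ((p • (1 : T.R)) - a) * ((q • (1 : T.R)) + b)
        + ((p • (1 : T.R)) + a) * ((q • (1 : T.R)) - b)
        = ((p • (1 : T.R)) * (q • (1 : T.R)) + (p • (1 : T.R)) * (q • (1 : T.R)))
          - (a * b + a * b) := by ring
    rw [h9] at h8
    exact sub_nonneg.1 h8
  have h10 := lga_half h7
  rwa [lur_nsmul_one_mul] at h10

lemma lur_bound_mul' (T : LuRing.{u}) {a b : T.R} {p q : ℕ}
    (ha1 : -(p • (1 : T.R)) ≤ a) (ha2 : a ≤ p • 1)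
    (hb1 : -(q • (1 : T.R)) ≤ b) (hb2 : b ≤ q • 1) :
    -((p * q) • (1 : T.R)) ≤ a * b := by
  have hna1 : -(p • (1 : T.R)) ≤ -a := lga_neg_le_neg ha2
  have hna2 : -a ≤ p • (1 : T.R) := lga_neg_le' ha1
  have h := lur_bound_mul T hna1 hna2 hb1 hb2
  rw [neg_mul] at h
  exact lga_neg_le' h

/-! ### the term algebra -/

inductive LTerm (α : Type u) : Type u
  | of : α → LTerm α
  | add : LTerm α → LTerm α → LTerm α
  | neg : LTerm α → LTerm α
  | mul : LTerm α → LTerm α → LTerm α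
  | sup : LTerm α → LTerm α → LTerm α
  | inf : LTerm α → LTerm α → LTerm α

def LTerm.eval (L : LuGroup.{u}) (T : LuRing.{u}) (f : L.G → T.R) : LTerm L.G → T.R
  | .of a => f a
  | .add t s => LTerm.eval L T f t + LTerm.eval L T f s
  | .neg t => - LTerm.eval L T f t
  | .mul t s => LTerm.eval L T f t * LTerm.eval L T f s
  | .sup t s => LTerm.eval L T f t ⊔ LTerm.eval L T f s
  | .inf t s => LTerm.eval L T f t ⊓ LTerm.eval L T f s

/-- uniform bounds for the evaluation of a term -/
lemma LTerm.bound (L : LuGroup.{u}) (t : LTerm L.G) :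
    ∃ n : ℕ, ∀ T : LuRing.{u}, ∀ f : L.G → T.R, LuGroupRingHom L T f →
      (-(n • (1 : T.R)) ≤ LTerm.eval L T f t ∧ LTerm.eval L T f t ≤ n • 1) := by
  induction t with
  | of a =>
    obtain ⟨m, hm⟩ := L.u_strong a
    obtain ⟨m', hm'⟩ := L.u_strong (-a)
    refine ⟨m + m', fun T f hf => ?_⟩
    have hup : ∀ (b : L.G) (k : ℕ), b ≤ k • L.u → f b ≤ k • (1 : T.R) := by
      intro b k hb
      calc f b ≤ f (k • L.u) := hom_mono L T f hf hb
        _ = k • f L.u := hom_nsmul L T f hf k L.u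
        _ = k • (1 : T.R) := by rw [hf.2.2.2]
    constructor
    · have h1 : - f a ≤ m' • (1 : T.R) := by
        rw [← hom_neg L T f hf]
        exact hup (-a) m' hm'
      have h2 : -(m' • (1 : T.R)) ≤ f a := lga_neg_le' h1
      refine le_trans ?_ h2
      exact lga_neg_le_neg (nsmul_le_nsmul_left T.one_nonneg (Nat.le_add_left m' m))
    · exact (hup a m hm).trans (nsmul_le_nsmul_left T.one_nonneg (Nat.le_add_right m m'))
  | add t s iht ihs =>
    obtain ⟨nt, ht⟩ := iht
    obtain ⟨ns, hs⟩ := ihs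
    refine ⟨nt + ns, fun T f hf => ?_⟩
    obtain ⟨h1, h2⟩ := ht T f hf
    obtain ⟨h3, h4⟩ := hs T f hf
    constructor
    · rw [add_nsmul, neg_add]
      exact add_le_add h1 h3
    · rw [add_nsmul]
      exact add_le_add h2 h4
  | neg t iht =>
    obtain ⟨nt, ht⟩ := iht
    refine ⟨nt, fun T f hf => ?_⟩
    obtain ⟨h1, h2⟩ := ht T f hf
    exact ⟨lga_neg_le_neg h2, lga_neg_le' h1⟩
  | mul t s iht ihs =>
    obtain ⟨nt, ht⟩ := iht
    obtain ⟨ns, hs⟩ := ihs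
    refine ⟨nt * ns, fun T f hf => ?_⟩
    obtain ⟨h1, h2⟩ := ht T f hf
    obtain ⟨h3, h4⟩ := hs T f hf
    exact ⟨lur_bound_mul' T h1 h2 h3 h4, lur_bound_mul T h1 h2 h3 h4⟩
  | sup t s iht ihs =>
    obtain ⟨nt, ht⟩ := iht
    obtain ⟨ns, hs⟩ := ihs
    refine ⟨max nt ns, fun T f hf => ?_⟩
    obtain ⟨h1, h2⟩ := ht T f hf
    obtain ⟨h3, h4⟩ := hs T f hf
    constructor
    · refine le_trans ?_ (le_sup_left.trans_eq rfl)
      exact le_trans (lga_neg_le_neg (nsmul_le_nsmul_left T.one_nonneg (le_max_left nt ns))) h1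
    · exact sup_le (h2.trans (nsmul_le_nsmul_left T.one_nonneg (le_max_left nt ns)))
        (h4.trans (nsmul_le_nsmul_left T.one_nonneg (le_max_right nt ns)))
  | inf t s iht ihs =>
    obtain ⟨nt, ht⟩ := iht
    obtain ⟨ns, hs⟩ := ihs
    refine ⟨max nt ns, fun T f hf => ?_⟩
    obtain ⟨h1, h2⟩ := ht T f hf
    obtain ⟨h3, h4⟩ := hs T f hf
    constructor
    · refine le_inf ?_ ?_
      · exact le_trans (lga_neg_le_neg (nsmul_le_nsmul_left T.one_nonneg (le_max_left nt ns))) h1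
      · exact le_trans (lga_neg_le_neg (nsmul_le_nsmul_left T.one_nonneg (le_max_right nt ns))) h3
    · exact inf_le_left.trans (h2.trans (nsmul_le_nsmul_left T.one_nonneg (le_max_left nt ns)))

/-! ### the free ℓu-ring as a quotient of the term algebra -/

def trel (L : LuGroup.{u}) (t s : LTerm L.G) : Prop :=
  ∀ T : LuRing.{u}, T.Arch → ∀ f : L.G → T.R, LuGroupRingHom L T f →
    LTerm.eval L T f t = LTerm.eval L T f s

def tsetoid (L : LuGroup.{u}) : Setoid (LTerm L.G) :=
  ⟨trel L, fun _ _ _ _ _ => rfl, fun h T hT f hf => (h T hT f hf).symm,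
    fun h1 h2 T hT f hf => (h1 T hT f hf).trans (h2 T hT f hf)⟩

def FreeLuRing (L : LuGroup.{u}) : Type u := Quotient (tsetoid L)

namespace FreeLuRing

variable (L : LuGroup.{u})

def mk (t : LTerm L.G) : FreeLuRing L := Quotient.mk (tsetoid L) t

def op2 (op : LTerm L.G → LTerm L.G → LTerm L.G)
    (hcong : ∀ t₁ t₂ s₁ s₂, trel L t₁ t₂ → trel L s₁ s₂ → trel L (op t₁ s₁) (op t₂ s₂)) :
    FreeLuRing L → FreeLuRing L → FreeLuRing L :=
  fun a b => Quotient.liftOn₂ a b (fun t s => mk L (op t s))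
    (fun _ _ _ _ ht hs => Quotient.sound (hcong _ _ _ _ ht hs))

def add' : FreeLuRing L → FreeLuRing L → FreeLuRing L :=
  op2 L LTerm.add (fun _ _ _ _ h1 h2 T hT f hf => by
    simp only [LTerm.eval, h1 T hT f hf, h2 T hT f hf])

def mul' : FreeLuRing L → FreeLuRing L → FreeLuRing L :=
  op2 L LTerm.mul (fun _ _ _ _ h1 h2 T hT f hf => by
    simp only [LTerm.eval, h1 T hT f hf, h2 T hT f hf])

def sup' : FreeLuRing L → FreeLuRing L → FreeLuRing L :=
  op2 L LTerm.sup (fun _ _ _ _ h1 h2 T hT f hf => by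
    simp only [LTerm.eval, h1 T hT f hf, h2 T hT f hf])

def inf' : FreeLuRing L → FreeLuRing L → FreeLuRing L :=
  op2 L LTerm.inf (fun _ _ _ _ h1 h2 T hT f hf => by
    simp only [LTerm.eval, h1 T hT f hf, h2 T hT f hf])

def neg' : FreeLuRing L → FreeLuRing L :=
  fun a => Quotient.liftOn a (fun t => mk L (LTerm.neg t))
    (fun _ _ h => Quotient.sound (fun T hT f hf => by
      simp only [LTerm.eval, h T hT f hf]))

def zero' : FreeLuRing L := mk L (LTerm.of 0)

def one' : FreeLuRing L := mk L (LTerm.of L.u)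

def evalQ (T : LuRing.{u}) (hT : T.Arch) (f : L.G → T.R) (hf : LuGroupRingHom L T f) :
    FreeLuRing L → T.R :=
  Quotient.lift (LTerm.eval L T f) (fun _ _ h => h T hT f hf)

lemma ext' {a b : FreeLuRing L}
    (h : ∀ (T : LuRing.{u}) (hT : T.Arch) (f : L.G → T.R) (hf : LuGroupRingHom L T f),
      evalQ L T hT f hf a = evalQ L T hT f hf b) : a = b := by
  induction a using Quotient.ind
  induction b using Quotient.ind
  exact Quotient.sound (fun T hT f hf => h T hT f hf)

section EvalLemmas
variable (T : LuRing.{u}) (hT : T.Arch) (f : L.G → T.R) (hf : LuGroupRingHom L T f)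

lemma evalQ_add' (a b : FreeLuRing L) :
    evalQ L T hT f hf (add' L a b) = evalQ L T hT f hf a + evalQ L T hT f hf b := by
  induction a using Quotient.ind
  induction b using Quotient.ind
  rfl

lemma evalQ_mul' (a b : FreeLuRing L) :
    evalQ L T hT f hf (mul' L a b) = evalQ L T hT f hf a * evalQ L T hT f hf b := by
  induction a using Quotient.ind
  induction b using Quotient.ind
  rfl

lemma evalQ_sup' (a b : FreeLuRing L) :
    evalQ L T hT f hf (sup' L a b) = evalQ L T hT f hf a ⊔ evalQ L T hT f hf b := by
  induction a using Quotient.ind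
  induction b using Quotient.ind
  rfl

lemma evalQ_inf' (a b : FreeLuRing L) :
    evalQ L T hT f hf (inf' L a b) = evalQ L T hT f hf a ⊓ evalQ L T hT f hf b := by
  induction a using Quotient.ind
  induction b using Quotient.ind
  rfl

lemma evalQ_neg' (a : FreeLuRing L) :
    evalQ L T hT f hf (neg' L a) = - evalQ L T hT f hf a := by
  induction a using Quotient.ind
  rfl

lemma evalQ_zero' : evalQ L T hT f hf (zero' L) = 0 := hom_zero L T f hf

lemma evalQ_one' : evalQ L T hT f hf (one' L) = 1 := hf.2.2.2

end EvalLemmas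

section Laws
variable {L}

lemma law_add_assoc (a b c : FreeLuRing L) :
    add' L (add' L a b) c = add' L a (add' L b c) :=
  ext' L (fun T hT f hf => by simp only [evalQ_add']; rw [add_assoc])

lemma law_zero_add (a : FreeLuRing L) : add' L (zero' L) a = a :=
  ext' L (fun T hT f hf => by simp only [evalQ_add', evalQ_zero']; rw [zero_add])

lemma law_add_zero (a : FreeLuRing L) : add' L a (zero' L) = a :=
  ext' L (fun T hT f hf => by simp only [evalQ_add', evalQ_zero']; rw [add_zero])

lemma law_add_comm (a b : FreeLuRing L) : add' L a b = add' L b a :=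
  ext' L (fun T hT f hf => by simp only [evalQ_add']; rw [add_comm])

lemma law_neg_add_cancel (a : FreeLuRing L) : add' L (neg' L a) a = zero' L :=
  ext' L (fun T hT f hf => by
    simp only [evalQ_add', evalQ_neg', evalQ_zero']; rw [neg_add_cancel])

lemma law_mul_assoc (a b c : FreeLuRing L) :
    mul' L (mul' L a b) c = mul' L a (mul' L b c) :=
  ext' L (fun T hT f hf => by simp only [evalQ_mul']; rw [mul_assoc])

lemma law_one_mul (a : FreeLuRing L) : mul' L (one' L) a = a :=
  ext' L (fun T hT f hf => by simp only [evalQ_mul', evalQ_one']; rw [one_mul])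

lemma law_mul_one (a : FreeLuRing L) : mul' L a (one' L) = a :=
  ext' L (fun T hT f hf => by simp only [evalQ_mul', evalQ_one']; rw [mul_one])

lemma law_left_distrib (a b c : FreeLuRing L) :
    mul' L a (add' L b c) = add' L (mul' L a b) (mul' L a c) :=
  ext' L (fun T hT f hf => by simp only [evalQ_mul', evalQ_add']; rw [left_distrib])

lemma law_right_distrib (a b c : FreeLuRing L) :
    mul' L (add' L a b) c = add' L (mul' L a c) (mul' L b c) :=
  ext' L (fun T hT f hf => by simp only [evalQ_mul', evalQ_add']; rw [right_distrib])

lemma law_zero_mul (a : FreeLuRing L) : mul' L (zero' L) a = zero' L :=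
  ext' L (fun T hT f hf => by simp only [evalQ_mul', evalQ_zero']; rw [zero_mul])

lemma law_mul_zero (a : FreeLuRing L) : mul' L a (zero' L) = zero' L :=
  ext' L (fun T hT f hf => by simp only [evalQ_mul', evalQ_zero']; rw [mul_zero])

lemma law_mul_comm (a b : FreeLuRing L) : mul' L a b = mul' L b a :=
  ext' L (fun T hT f hf => by simp only [evalQ_mul']; rw [mul_comm])

end Laws

instance : Add (FreeLuRing L) := ⟨add' L⟩
instance : Zero (FreeLuRing L) := ⟨zero' L⟩
instance : Neg (FreeLuRing L) := ⟨neg' L⟩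
instance : Mul (FreeLuRing L) := ⟨mul' L⟩
instance : One (FreeLuRing L) := ⟨one' L⟩

instance : CommRing (FreeLuRing L) where
  add := (· + ·)
  zero := 0
  neg := Neg.neg
  mul := (· * ·)
  one := 1
  nsmul := nsmulRec
  zsmul := zsmulRec
  add_assoc := law_add_assoc
  zero_add := law_zero_add
  add_zero := law_add_zero
  add_comm := law_add_comm
  neg_add_cancel := law_neg_add_cancel
  mul_assoc := law_mul_assoc
  one_mul := law_one_mul
  mul_one := law_mul_one
  left_distrib := law_left_distrib
  right_distrib := law_right_distrib
  zero_mul := law_zero_mul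
  mul_zero := law_mul_zero
  mul_comm := law_mul_comm

instance : Lattice (FreeLuRing L) where
  le a b := ∀ (T : LuRing.{u}) (hT : T.Arch) (f : L.G → T.R) (hf : LuGroupRingHom L T f),
    evalQ L T hT f hf a ≤ evalQ L T hT f hf b
  le_refl a := fun T hT f hf => le_rfl
  le_trans a b c h1 h2 := fun T hT f hf => (h1 T hT f hf).trans (h2 T hT f hf)
  le_antisymm a b h1 h2 := ext' L (fun T hT f hf =>
    le_antisymm (h1 T hT f hf) (h2 T hT f hf))
  sup := sup' L
  le_sup_left a b := fun T hT f hf => by rw [evalQ_sup']; exact le_sup_left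
  le_sup_right a b := fun T hT f hf => by rw [evalQ_sup']; exact le_sup_right
  sup_le a b c h1 h2 := fun T hT f hf => by
    rw [evalQ_sup']; exact sup_le (h1 T hT f hf) (h2 T hT f hf)
  inf := inf' L
  inf_le_left a b := fun T hT f hf => by rw [evalQ_inf']; exact inf_le_left
  inf_le_right a b := fun T hT f hf => by rw [evalQ_inf']; exact inf_le_right
  le_inf a b c h1 h2 := fun T hT f hf => by
    rw [evalQ_inf']; exact le_inf (h1 T hT f hf) (h2 T hT f hf)

section NotationLemmas
variable (T : LuRing.{u}) (hT : T.Arch) (f : L.G → T.R) (hf : LuGroupRingHom L T f)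

lemma evalQ_add (a b : FreeLuRing L) :
    evalQ L T hT f hf (a + b) = evalQ L T hT f hf a + evalQ L T hT f hf b :=
  evalQ_add' L T hT f hf a b

lemma evalQ_mul (a b : FreeLuRing L) :
    evalQ L T hT f hf (a * b) = evalQ L T hT f hf a * evalQ L T hT f hf b :=
  evalQ_mul' L T hT f hf a b

lemma evalQ_sup (a b : FreeLuRing L) :
    evalQ L T hT f hf (a ⊔ b) = evalQ L T hT f hf a ⊔ evalQ L T hT f hf b :=
  evalQ_sup' L T hT f hf a b

lemma evalQ_inf (a b : FreeLuRing L) :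
    evalQ L T hT f hf (a ⊓ b) = evalQ L T hT f hf a ⊓ evalQ L T hT f hf b :=
  evalQ_inf' L T hT f hf a b

lemma evalQ_zero : evalQ L T hT f hf (0 : FreeLuRing L) = 0 := evalQ_zero' L T hT f hf

lemma evalQ_one : evalQ L T hT f hf (1 : FreeLuRing L) = 1 := evalQ_one' L T hT f hf

lemma evalQ_nsmul (n : ℕ) (a : FreeLuRing L) :
    evalQ L T hT f hf (n • a) = n • evalQ L T hT f hf a := by
  induction n with
  | zero => simpa using evalQ_zero L T hT f hf
  | succ n ih => rw [succ_nsmul, succ_nsmul, evalQ_add, ih]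

lemma le_def {a b : FreeLuRing L} : a ≤ b ↔
    ∀ (T : LuRing.{u}) (hT : T.Arch) (f : L.G → T.R) (hf : LuGroupRingHom L T f),
      evalQ L T hT f hf a ≤ evalQ L T hT f hf b := Iff.rfl

end NotationLemmas

end FreeLuRing

open FreeLuRing in
/-- the free unital Archimedean ℓu-ring over `L` -/
noncomputable def freeLuRing (L : LuGroup.{u}) : LuRing.{u} where
  R := FreeLuRing L
  add_le_add a b c h := fun T hT f hf => by
    rw [evalQ_add, evalQ_add]
    exact add_le_add_right (h T hT f hf) _
  one_nonneg := fun T hT f hf => by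
    rw [evalQ_zero, evalQ_one]
    exact T.one_nonneg
  one_strong a := by
    induction a using Quotient.ind with
    | _ t =>
      obtain ⟨n, hb⟩ := LTerm.bound L t
      refine ⟨n, fun T hT f hf => ?_⟩
      rw [evalQ_nsmul, evalQ_one]
      exact (hb T f hf).2
  mul_nonneg a b ha hb := fun T hT f hf => by
    rw [evalQ_mul]
    have h1 := ha T hT f hf
    have h2 := hb T hT f hf
    rw [evalQ_zero] at h1 h2 ⊢
    exact T.mul_nonneg _ _ h1 h2
  f_ring x y z hxy hz := by
    apply FreeLuRing.ext'
    intro T hT f hf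
    rw [evalQ_inf, evalQ_mul, evalQ_zero]
    have h1 := congrArg (FreeLuRing.evalQ L T hT f hf) hxy
    rw [evalQ_inf, evalQ_zero] at h1
    have h2 := hz T hT f hf
    rw [evalQ_zero] at h2
    exact T.f_ring _ _ _ h1 h2

lemma freeLuRing_arch (L : LuGroup.{u}) : (freeLuRing L).Arch := by
  intro x y h
  intro T hT f hf
  refine le_of_le_of_eq ?_ (FreeLuRing.evalQ_zero L T hT f hf).symm
  refine hT _ (FreeLuRing.evalQ L T hT f hf y) ?_
  intro n
  have := h n T hT f hf
  exact (FreeLuRing.evalQ_nsmul L T hT f hf n x).symm.trans_le this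
/-- every Archimedean ℓu-group embeds into a unital Archimedean ℓu-ring,
universally with respect to ℓu-group morphisms into unital Archimedean ℓu-rings. -/
theorem stmt13 (L : LuGroup.{u}) (hL : L.Arch) :
    ∃ (R : LuRing.{u}) (ε : L.G → R.R),
      R.Arch ∧ LuGroupRingHom L R ε ∧ Function.Injective ε ∧
      ∀ (T : LuRing.{u}), T.Arch → ∀ f : L.G → T.R, LuGroupRingHom L T f →
        ∃ g : R.R → T.R, LuRingHom R T g ∧ g ∘ ε = f := by
  classical
  refine ⟨freeLuRing L, fun a => FreeLuRing.mk L (LTerm.of a), freeLuRing_arch L,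
    ⟨?_, ?_, ?_, ?_⟩, ?_, ?_⟩
  · intro a b
    exact Quotient.sound (fun T hT f hf => by
      simp only [LTerm.eval]; exact hf.1 a b)
  · intro a b
    exact Quotient.sound (fun T hT f hf => by
      simp only [LTerm.eval]; exact hf.2.1 a b)
  · intro a b
    exact Quotient.sound (fun T hT f hf => by
      simp only [LTerm.eval]; exact hf.2.2.1 a b)
  · rfl
  · -- injectivity
    intro a b h
    by_contra hne
    have hd : (0 : L.G) < |a - b| := by
      rcases (abs_nonneg (a - b)).lt_or_eq with h1 | h1
      · exact h1
      · exfalso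
        apply hne
        have h2 : a - b ≤ 0 := le_trans (le_abs_self _) h1.symm.le
        have h3 : -(a - b) ≤ 0 := le_trans (neg_le_abs _) h1.symm.le
        have h4 : (0 : L.G) ≤ a - b := by
          have h5 := lga_neg_le' h3
          rwa [neg_zero] at h5
        exact sub_eq_zero.1 (le_antisymm h2 h4)
    obtain ⟨φ, hadd, hsup, hinf, hu1, hpos⟩ := lu_separation L hL hd
    have hφ0 : φ 0 = 0 := by
      have h0 := hadd 0 0
      rw [add_zero] at h0
      linarith
    have hφneg : ∀ g, φ (-g) = - φ g := by
      intro g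
      have h0 := hadd g (-g)
      rw [add_neg_cancel, hφ0] at h0
      linarith
    set f : L.G → realLuRing.{u}.R := fun g => ULift.up (φ g) with hfdef
    have hf : LuGroupRingHom L realLuRing.{u} f := by
      refine ⟨?_, ?_, ?_, ?_⟩
      · intro x y
        exact ULift.down_injective (hadd x y)
      · intro x y
        exact (congrArg ULift.up.{u} (hsup x y)).trans (up_lattice_hom.{u}.1 (φ x) (φ y))
      · intro x y
        exact (congrArg ULift.up.{u} (hinf x y)).trans (up_lattice_hom.{u}.2 (φ x) (φ y))
      · show ULift.up (φ L.u) = 1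
        rw [hu1]
        rfl
    have h5 := Quotient.exact h realLuRing.{u} realLuRing_arch.{u} f hf
    have h6 : φ a = φ b := congrArg ULift.down h5
    have h7 : φ (a - b) = 0 := by
      have h0 := hadd b (a - b)
      rw [show b + (a - b) = a by abel] at h0
      linarith
    have h8 : φ |a - b| = 0 := by
      rw [show |a - b| = (a - b) ⊔ (-(a - b)) from by rw [abs]]
      rw [hsup, hφneg, h7]
      norm_num
    exact lt_irrefl (0 : ℝ) (h8 ▸ hpos)
  · -- universal property
    intro T hT f hf
    refine ⟨FreeLuRing.evalQ L T hT f hf, ⟨?_, ?_, ?_, ?_, ?_⟩, ?_⟩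
    · exact fun x y => FreeLuRing.evalQ_add L T hT f hf x y
    · exact fun x y => FreeLuRing.evalQ_mul L T hT f hf x y
    · exact FreeLuRing.evalQ_one L T hT f hf
    · exact fun x y => FreeLuRing.evalQ_sup L T hT f hf x y
    · exact fun x y => FreeLuRing.evalQ_inf L T hT f hf x y
    · exact funext fun a => rfl
end

section
/- Every Archimedean ℓu-group (G, u) admits an injective group homomorphism ε into a unital Archimedean ℓu-ring R such that ε preserves ∨ and ∧ and ε(u) = 1. -/
universe u

set_option linter.unusedSectionVars false
set_option linter.unusedVariables false
set_option maxHeartbeats 1000000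

universe v

namespace S14

variable {α : Type*} [AddCommGroup α] [Lattice α] [AddLeftMono α]

theorem posPart_add_le' (a b : α) : (a+b)⁺ ≤ a⁺ + b⁺ :=
  sup_le (add_le_add le_sup_left le_sup_left) (add_nonneg le_sup_right le_sup_right)

theorem nsmul_posPart_le (a : α) (n : ℕ) : (n • a)⁺ ≤ n • a⁺ :=
  sup_le (nsmul_le_nsmul_right le_sup_left n) (nsmul_nonneg le_sup_right n)

theorem zsmul_nonneg' {u : α} (hu : 0 ≤ u) {k : ℤ} (hk : 0 ≤ k) : 0 ≤ k • u := by
  obtain ⟨n, rfl⟩ := Int.eq_ofNat_of_zero_le hk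
  rw [natCast_zsmul]; exact nsmul_nonneg hu n

theorem zsmul_mono {u : α} (hu : 0 ≤ u) {m n : ℤ} (h : m ≤ n) : m • u ≤ n • u := by
  have h2 := zsmul_nonneg' hu (sub_nonneg.mpr h)
  rw [sub_zsmul, ← sub_eq_add_neg] at h2
  exact sub_nonneg.mp h2

/-- disjointness propagates to multiples -/
theorem nsmul_inf_eq_zero {a b : α} (ha : 0 ≤ a) (hb : 0 ≤ b) (hab : a ⊓ b = 0) (n : ℕ) :
    (n • a) ⊓ b = 0 := by
  induction n with
  | zero => simpa using inf_eq_left.mpr hb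
  | succ n ih =>
    refine le_antisymm ?_ (le_inf (nsmul_nonneg ha (n+1)) hb)
    have h1 : ((n+1) • a) ⊓ b ≤ ((n • a + a) ⊓ (n • a + b)) ⊓ b := by
      refine le_inf (le_inf ?_ ?_) inf_le_right
      · rw [succ_nsmul]; exact inf_le_left
      · exact inf_le_right.trans (le_add_of_nonneg_left (nsmul_nonneg ha n))
    rw [← add_inf, hab, add_zero] at h1
    exact h1.trans ih.le

theorem posPart_posPart (a : α) : (a⁺)⁺ = a⁺ := posPart_eq_self.mpr (posPart_nonneg a)

/-- A solid set: subgroup closed under domination of absolute values. -/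
def SolidIn (A : Set α) : Prop :=
  (0:α) ∈ A ∧ (∀ x y, x ∈ A → y ∈ A → x + y ∈ A) ∧ (∀ x, x ∈ A → -x ∈ A) ∧
  (∀ x y, y ∈ A → |x| ≤ |y| → x ∈ A)

theorem SolidIn.abs_mem {A : Set α} (hA : SolidIn A) {x : α} (hx : x ∈ A) : |x| ∈ A :=
  hA.2.2.2 _ _ hx (le_of_eq (abs_abs x))

theorem SolidIn.mem_of_abs_le_of_nonneg {A : Set α} (hA : SolidIn A) {x h : α}
    (hh : h ∈ A) (h0 : 0 ≤ h) (hx : |x| ≤ h) : x ∈ A :=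
  hA.2.2.2 _ _ hh (by rwa [abs_of_nonneg h0])

/-- solid set generated by a solid set and one positive element -/
def solidExt (A : Set α) (g : α) : Set α :=
  {x | ∃ h ∈ A, 0 ≤ h ∧ ∃ k : ℕ, |x| ≤ h + k • g}

theorem solidExt_solid {A : Set α} (hA : SolidIn A) {g : α} (hg : 0 ≤ g) :
    SolidIn (solidExt A g) := by
  refine ⟨⟨0, hA.1, le_refl 0, 0, by simp⟩, ?_, ?_, ?_⟩
  · rintro x y ⟨h, hh, h0, k, hk⟩ ⟨h', hh', h0', k', hk'⟩
    refine ⟨h + h', hA.2.1 _ _ hh hh', add_nonneg h0 h0', k + k', ?_⟩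
    calc |x + y| ≤ |x| + |y| := abs_add_le x y
    _ ≤ (h + k • g) + (h' + k' • g) := add_le_add hk hk'
    _ = h + h' + (k + k') • g := by rw [add_nsmul]; abel
  · rintro x ⟨h, hh, h0, k, hk⟩
    exact ⟨h, hh, h0, k, by rwa [abs_neg]⟩
  · rintro x y ⟨h, hh, h0, k, hk⟩ hxy
    exact ⟨h, hh, h0, k, hxy.trans hk⟩

theorem subset_solidExt {A : Set α} (hA : SolidIn A) (g : α) : A ⊆ solidExt A g :=
  fun x hx => ⟨|x|, hA.abs_mem hx, abs_nonneg x, 0, by simp⟩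

theorem mem_solidExt_self {A : Set α} (hA : SolidIn A) {g : α} (hg : 0 ≤ g) :
    g ∈ solidExt A g :=
  ⟨0, hA.1, le_refl 0, 1, by simp [abs_of_nonneg hg]⟩

/-- Zorn: a maximal solid set avoiding b -/
theorem exists_maximal_solid {b : α} (hb : b ≠ 0) :
    ∃ M : Set α, SolidIn M ∧ b ∉ M ∧
      ∀ A : Set α, SolidIn A → b ∉ A → M ⊆ A → A = M := by
  have hchain : ∀ c ⊆ {A : Set α | SolidIn A ∧ b ∉ A}, IsChain (· ⊆ ·) c → c.Nonempty →
      ∃ ub ∈ {A : Set α | SolidIn A ∧ b ∉ A}, ∀ s ∈ c, s ⊆ ub := by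
    intro c hc hchain hcne
    refine ⟨⋃₀ c, ⟨⟨?_, ?_, ?_, ?_⟩, ?_⟩, fun s hs => Set.subset_sUnion_of_mem hs⟩
    · obtain ⟨A, hA⟩ := hcne
      exact ⟨A, hA, (hc hA).1.1⟩
    · rintro x y ⟨A, hA, hxA⟩ ⟨B, hB, hyB⟩
      rcases hchain.total hA hB with h | h
      · exact ⟨B, hB, (hc hB).1.2.1 _ _ (h hxA) hyB⟩
      · exact ⟨A, hA, (hc hA).1.2.1 _ _ hxA (h hyB)⟩
    · rintro x ⟨A, hA, hxA⟩; exact ⟨A, hA, (hc hA).1.2.2.1 _ hxA⟩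
    · rintro x y ⟨A, hA, hyA⟩ hxy; exact ⟨A, hA, (hc hA).1.2.2.2 _ _ hyA hxy⟩
    · rintro ⟨A, hA, hbA⟩; exact (hc hA).2 hbA
  have h0 : ({0} : Set α) ∈ {A : Set α | SolidIn A ∧ b ∉ A} := by
    refine ⟨⟨rfl, ?_, ?_, ?_⟩, by simpa using hb⟩
    · rintro x y (rfl : x = 0) (rfl : y = 0); simp
    · rintro x (rfl : x = 0); simp
    · rintro x y (rfl : y = 0) hxy
      simp only [abs_zero] at hxy
      have h1 : x ≤ 0 := (le_abs_self x).trans hxy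
      have h2 : 0 ≤ x := neg_nonpos.mp ((neg_le_abs x).trans hxy)
      exact le_antisymm h1 h2
  obtain ⟨M, -, hM⟩ := zorn_subset_nonempty {A : Set α | SolidIn A ∧ b ∉ A} hchain {0} h0
  refine ⟨M, hM.prop.1, hM.prop.2, fun A hA hbA hMA => ?_⟩
  exact subset_antisymm (hM.le_of_ge ⟨hA, hbA⟩ hMA) hMA

/-- primeness of a maximal solid set -/
theorem maximal_solid_prime {b : α} {M : Set α} (hM : SolidIn M) (hbM : b ∉ M)
    (hmax : ∀ A : Set α, SolidIn A → b ∉ A → M ⊆ A → A = M) (z : α) :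
    z⁺ ∈ M ∨ (-z)⁺ ∈ M := by
  by_contra hcon
  push_neg at hcon
  obtain ⟨h1, h2⟩ := hcon
  -- b belongs to both extensions
  have hb1 : b ∈ solidExt M z⁺ := by
    by_contra hb1
    exact h1 ((hmax _ (solidExt_solid hM (posPart_nonneg z)) hb1 (subset_solidExt hM _)) ▸
      mem_solidExt_self hM (posPart_nonneg z))
  have hb2 : b ∈ solidExt M (-z)⁺ := by
    by_contra hb2
    exact h2 ((hmax _ (solidExt_solid hM (posPart_nonneg (-z))) hb2 (subset_solidExt hM _)) ▸
      mem_solidExt_self hM (posPart_nonneg (-z)))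
  obtain ⟨g1, hg1, hg10, k1, hk1⟩ := hb1
  obtain ⟨g2, hg2, hg20, k2, hk2⟩ := hb2
  set k := max k1 k2 with hk
  have hz1 : k1 • z⁺ ≤ k • z⁺ := nsmul_le_nsmul_left (posPart_nonneg z) (le_max_left k1 k2)
  have hz2 : k2 • (-z)⁺ ≤ k • (-z)⁺ := nsmul_le_nsmul_left (posPart_nonneg (-z)) (le_max_right k1 k2)
  have hd : (k • z⁺) ⊓ (k • (-z)⁺) = 0 := by
    have d1 : z⁺ ⊓ (-z)⁺ = 0 := posPart_inf_negPart_eq_zero z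
    have d2 := nsmul_inf_eq_zero (posPart_nonneg z) (posPart_nonneg (-z)) d1 k
    have d3 : (-z)⁺ ⊓ (k • z⁺) = 0 := by rw [inf_comm]; exact d2
    have := nsmul_inf_eq_zero (posPart_nonneg (-z)) (nsmul_nonneg (posPart_nonneg z) k) d3 k
    rw [inf_comm]; exact this
  have key : |b| ≤ g1 + g2 := by
    have e1 : |b| ≤ (g1 + g2 + k • z⁺) ⊓ (g1 + g2 + k • (-z)⁺) := by
      refine le_inf ?_ ?_
      · exact hk1.trans (add_le_add (le_add_of_nonneg_right hg20) hz1)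
      · refine hk2.trans ?_
        calc g2 + k2 • (-z)⁺ ≤ g2 + k • (-z)⁺ := add_le_add_right hz2 g2
        _ ≤ g1 + g2 + k • (-z)⁺ := add_le_add_left (le_add_of_nonneg_left hg10) _
    rwa [← add_inf, hd, add_zero] at e1
  exact hbM (hM.mem_of_abs_le_of_nonneg (hM.2.1 _ _ hg1 hg2) (add_nonneg hg10 hg20) key)

section Phi

variable {u : α} {M : Set α}

/-- "x ≤ y mod M" -/
def rle (M : Set α) (x y : α) : Prop := (x - y)⁺ ∈ M

/-- The hypotheses for the quotient construction. -/
structure Setup [AddCommGroup α] [Lattice α] (u : α) (M : Set α) : Prop where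
  solid : SolidIn M
  prime : ∀ z : α, z⁺ ∈ M ∨ (-z)⁺ ∈ M
  unotmem : u ∉ M
  u0 : 0 ≤ u
  strong : ∀ x : α, ∃ n : ℕ, x ≤ n • u

variable (S : Setup u M)
include S

theorem rle_of_le {x y : α} (h : x ≤ y) : rle M x y := by
  have h2 : (x - y)⁺ = 0 := posPart_eq_zero.mpr (sub_nonpos.mpr h)
  rw [rle, h2]; exact S.solid.1

theorem rle_refl (x : α) : rle M x x := rle_of_le S (le_refl x)

theorem mem_of_nonneg_le {s p q : α} (hs : 0 ≤ s) (hp : p ∈ M) (hq : q ∈ M)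
    (hp0 : 0 ≤ p) (hq0 : 0 ≤ q) (h : s ≤ p + q) : s ∈ M := by
  refine S.solid.2.2.2 _ _ (S.solid.2.1 _ _ hp hq) ?_
  rw [abs_of_nonneg hs, abs_of_nonneg (add_nonneg hp0 hq0)]
  exact h

theorem rle_trans {x y z : α} (h1 : rle M x y) (h2 : rle M y z) : rle M x z := by
  have key : (x - z)⁺ ≤ (x - y)⁺ + (y - z)⁺ := by
    have h3 : x - z = (x - y) + (y - z) := by abel
    rw [h3]; exact posPart_add_le' _ _
  exact mem_of_nonneg_le S (posPart_nonneg _) h1 h2 (posPart_nonneg _) (posPart_nonneg _) key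

theorem rle_add {x y x' y' : α} (h1 : rle M x y) (h2 : rle M x' y') :
    rle M (x + x') (y + y') := by
  have key : (x + x' - (y + y'))⁺ ≤ (x - y)⁺ + (x' - y')⁺ := by
    have h3 : x + x' - (y + y') = (x - y) + (x' - y') := by abel
    rw [h3]; exact posPart_add_le' _ _
  exact mem_of_nonneg_le S (posPart_nonneg _) h1 h2 (posPart_nonneg _) (posPart_nonneg _) key

theorem rle_neg {x y : α} (h : rle M x y) : rle M (-y) (-x) := by
  have h3 : -y - -x = x - y := by abel
  rw [rle, h3]; exact h

theorem rle_nsmul {x y : α} (h : rle M x y) (n : ℕ) : rle M (n • x) (n • y) := by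
  have hmem : n • (x-y)⁺ ∈ M := by
    induction n with
    | zero => simpa using S.solid.1
    | succ k ih => rw [succ_nsmul]; exact S.solid.2.1 _ _ ih h
  have key : (n • x - n • y)⁺ ≤ n • (x - y)⁺ := by
    rw [← smul_sub]; exact nsmul_posPart_le _ n
  refine S.solid.2.2.2 _ _ hmem ?_
  rw [abs_of_nonneg (posPart_nonneg _), abs_of_nonneg (nsmul_nonneg (posPart_nonneg _) n)]
  exact key

theorem rle_total (x y : α) : rle M x y ∨ rle M y x := by
  rcases S.prime (x - y) with h | h
  · exact Or.inl h
  · right; rw [rle]; rwa [neg_sub] at h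

theorem int_le_of_rle {m m' : ℤ} (h : rle M (m • u) (m' • u)) : m ≤ m' := by
  by_contra hc
  push_neg at hc
  have h1 : (1:ℤ) ≤ m - m' := by omega
  have h2 : u ≤ (m - m') • u := by
    have := zsmul_mono S.u0 h1
    rwa [one_zsmul] at this
  have e : m • u - m' • u = (m - m') • u := by rw [sub_zsmul]; abel
  have h3 : (m • u - m' • u)⁺ = (m - m') • u := by
    rw [e]
    exact posPart_eq_self.mpr (S.u0.trans h2)
  rw [rle, h3] at h
  exact S.unotmem (S.solid.2.2.2 _ _ h
    (by rw [abs_of_nonneg S.u0, abs_of_nonneg (S.u0.trans h2)]; exact h2))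

theorem exists_greatest (x : α) (n : ℕ) :
    ∃ m : ℤ, (rle M (m • u) (n • x) ∧ ∀ m' : ℤ, rle M (m' • u) (n • x) → m' ≤ m) := by
  obtain ⟨N, hN⟩ := S.strong x
  obtain ⟨N', hN'⟩ := S.strong (-x)
  refine Int.exists_greatest_of_bdd ⟨((n * N : ℕ) : ℤ), fun m hm => ?_⟩ ⟨-((n * N' : ℕ) : ℤ), rle_of_le S ?_⟩
  · have h1 : n • x ≤ (n * N) • u := by
      calc n • x ≤ n • (N • u) := nsmul_le_nsmul_right hN n
      _ = (n * N) • u := by rw [mul_comm]; exact (mul_nsmul u N n).symm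
    have h2 : rle M (m • u) (((n*N : ℕ) : ℤ) • u) := by
      refine rle_trans S hm (rle_of_le S ?_)
      rw [natCast_zsmul]; exact h1
    exact_mod_cast int_le_of_rle S h2
  · have h1 : n • (-x) ≤ (n * N') • u := by
      calc n • (-x) ≤ n • (N' • u) := nsmul_le_nsmul_right hN' n
      _ = (n * N') • u := by rw [mul_comm]; exact (mul_nsmul u N' n).symm
    rw [smul_neg] at h1
    have h2 : -((n * N' : ℕ) • u) ≤ n • x := by
      rw [neg_le]; exact h1
    rw [neg_zsmul, natCast_zsmul]
    exact h2

/-- the slope function -/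
noncomputable def cf (x : α) (n : ℕ) : ℤ := (exists_greatest S x n).choose

theorem cf_rle (x : α) (n : ℕ) : rle M ((cf S x n) • u) (n • x) :=
  (exists_greatest S x n).choose_spec.1

theorem cf_max (x : α) (n : ℕ) {m : ℤ} (h : rle M (m • u) (n • x)) : m ≤ cf S x n :=
  (exists_greatest S x n).choose_spec.2 m h

theorem rle_succ_cf (x : α) (n : ℕ) : rle M (n • x) ((cf S x n + 1) • u) := by
  rcases rle_total S (n • x) ((cf S x n + 1) • u) with h | h
  · exact h
  · have := cf_max S x n h
    omega

theorem cf_mono_rle {x y : α} (h : rle M x y) (n : ℕ) : cf S x n ≤ cf S y n :=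
  cf_max S y n (rle_trans S (cf_rle S x n) (rle_nsmul S h n))

theorem cf_super (x : α) (n k : ℕ) : cf S x n + cf S x k ≤ cf S x (n + k) := by
  apply cf_max
  rw [add_zsmul, add_nsmul]
  exact rle_add S (cf_rle S x n) (cf_rle S x k)

theorem cf_add_ge (x y : α) (n : ℕ) : cf S x n + cf S y n ≤ cf S (x + y) n := by
  apply cf_max
  rw [add_zsmul, smul_add]
  exact rle_add S (cf_rle S x n) (cf_rle S y n)

theorem cf_add_le (x y : α) (n : ℕ) : cf S (x + y) n ≤ cf S x n + cf S y n + 1 := by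
  have h1 : rle M ((cf S (x+y) n) • u) (n • x + n • y) := by
    rw [← smul_add]; exact cf_rle S (x + y) n
  have h2 : rle M (-((cf S y n + 1) • u)) (-(n • y)) := rle_neg S (rle_succ_cf S y n)
  have h3 : rle M ((cf S (x+y) n) • u + -((cf S y n + 1) • u)) (n • x + n • y + -(n • y)) := by
    exact rle_add S h1 h2
  have h4 : rle M ((cf S (x+y) n - (cf S y n + 1)) • u) (n • x) := by
    have e1 : (cf S (x+y) n - (cf S y n + 1)) • u = (cf S (x+y) n) • u + -((cf S y n + 1) • u) := by
      rw [sub_zsmul]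
    have e2 : n • x + n • y + -(n • y) = n • x := by abel
    rw [e1]
    rw [e2] at h3
    exact h3
  have := cf_max S x n h4
  omega

theorem cf_u (n : ℕ) : cf S u n = n := by
  refine le_antisymm ?_ ?_
  · exact int_le_of_rle S (rle_trans S (cf_rle S u n) (rle_of_le S (le_of_eq (natCast_zsmul u n).symm)))
  · apply cf_max
    exact rle_of_le S (le_of_eq (natCast_zsmul u n))

theorem cf_le (x : α) {N : ℕ} (hN : x ≤ N • u) (n : ℕ) : cf S x n ≤ n * N := by
  have h1 : n • x ≤ (n * N) • u := by
    calc n • x ≤ n • (N • u) := nsmul_le_nsmul_right hN n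
    _ = (n * N) • u := by rw [mul_comm]; exact (mul_nsmul u N n).symm
  have h2 := rle_trans S (cf_rle S x n) (rle_of_le S (h1.trans_eq (natCast_zsmul u (n*N)).symm))
  exact_mod_cast int_le_of_rle S h2

end Phi

section PhiReal
open Filter Topology

variable {u : α} {M : Set α} (S : Setup u M)
include S

theorem cf_subadd (x : α) : Subadditive (fun n => -((cf S x n : ℤ) : ℝ)) := by
  intro m n
  have h := cf_super S x m n
  have : ((cf S x m : ℝ) + (cf S x n : ℝ)) ≤ ((cf S x (m+n) : ℝ)) := by exact_mod_cast h
  simp only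
  linarith

theorem cf_bdd (x : α) : BddBelow (Set.range fun n : ℕ => (-(cf S x n : ℝ)) / n) := by
  obtain ⟨N, hN⟩ := S.strong x
  refine ⟨-(N:ℝ), ?_⟩
  rintro r ⟨n, rfl⟩
  rcases Nat.eq_zero_or_pos n with rfl | hn
  · simp
  · have h := cf_le S x hN n
    have hn0 : (0:ℝ) < n := by exact_mod_cast hn
    rw [le_div_iff₀ hn0]
    have : (cf S x n : ℝ) ≤ (n : ℝ) * N := by exact_mod_cast h
    nlinarith

noncomputable def phi (x : α) : ℝ := -(cf_subadd S x).lim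

theorem tendsto_phi (x : α) :
    Filter.Tendsto (fun n : ℕ => (cf S x n : ℝ) / n) Filter.atTop (nhds (phi S x)) := by
  have h := (cf_subadd S x).tendsto_lim (cf_bdd S x)
  have h2 := h.neg
  simp only [neg_div, neg_neg] at h2
  exact h2

theorem phi_mono_rle {x y : α} (h : rle M x y) : phi S x ≤ phi S y := by
  refine le_of_tendsto_of_tendsto' (tendsto_phi S x) (tendsto_phi S y) fun n => ?_
  have hc := cf_mono_rle S h n
  have : (cf S x n : ℝ) ≤ (cf S y n : ℝ) := by exact_mod_cast hc
  gcongr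

theorem phi_congr {x y : α} (h : ∀ n, cf S x n = cf S y n) : phi S x = phi S y :=
  tendsto_nhds_unique (tendsto_phi S x) ((tendsto_phi S y).congr fun n => by rw [h n])

theorem phi_add (x y : α) : phi S (x + y) = phi S x + phi S y := by
  have hx := tendsto_phi S x
  have hy := tendsto_phi S y
  have hlow : Filter.Tendsto (fun n : ℕ => (cf S x n : ℝ)/n + (cf S y n : ℝ)/n)
      Filter.atTop (nhds (phi S x + phi S y)) := hx.add hy
  have hup : Filter.Tendsto (fun n : ℕ => (cf S x n : ℝ)/n + (cf S y n : ℝ)/n + 1/n)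
      Filter.atTop (nhds (phi S x + phi S y)) := by
    simpa using hlow.add tendsto_one_div_atTop_nhds_zero_nat
  have hmain : Filter.Tendsto (fun n : ℕ => (cf S (x+y) n : ℝ)/n)
      Filter.atTop (nhds (phi S x + phi S y)) := by
    refine tendsto_of_tendsto_of_tendsto_of_le_of_le hlow hup (fun n => ?_) (fun n => ?_)
    · rw [← add_div]
      have h := cf_add_ge S x y n
      have h2 : ((cf S x n : ℝ) + (cf S y n : ℝ)) ≤ (cf S (x+y) n : ℝ) := by exact_mod_cast h
      gcongr
    · rw [← add_div, ← add_div]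
      have h := cf_add_le S x y n
      have h2 : (cf S (x+y) n : ℝ) ≤ (cf S x n : ℝ) + (cf S y n : ℝ) + 1 := by exact_mod_cast h
      gcongr
  exact tendsto_nhds_unique (tendsto_phi S (x+y)) hmain

theorem phi_u : phi S u = 1 := by
  have h : ∀ᶠ n : ℕ in Filter.atTop, (1:ℝ) = (cf S u n : ℝ)/n := by
    filter_upwards [Filter.eventually_ge_atTop 1] with n hn
    have hn0 : (n:ℝ) ≠ 0 := Nat.cast_ne_zero.mpr (by omega)
    rw [cf_u S n]
    push_cast
    rw [div_self hn0]
  exact tendsto_nhds_unique (tendsto_phi S u) (Filter.Tendsto.congr' h tendsto_const_nhds)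

theorem phi_sup_of_rle {x y : α} (h : rle M x y) : phi S (x ⊔ y) = phi S y := by
  have e : (x ⊔ y) - y = (x - y)⁺ := by rw [sup_sub]; simp [posPart_def]
  have hxy : rle M (x ⊔ y) y := by rw [rle, e, posPart_posPart]; exact h
  refine phi_congr S fun n => le_antisymm (cf_mono_rle S hxy n)
    (cf_mono_rle S (rle_of_le S le_sup_right) n)

theorem phi_inf_of_rle {x y : α} (h : rle M x y) : phi S (x ⊓ y) = phi S x := by
  have e : x - (x ⊓ y) = (x - y)⁺ := by
    rw [sub_inf, sub_self, posPart_def, sup_comm]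
  have hxy : rle M x (x ⊓ y) := by rw [rle, e, posPart_posPart]; exact h
  refine phi_congr S fun n => le_antisymm (cf_mono_rle S (rle_of_le S inf_le_left) n)
    (cf_mono_rle S hxy n)

theorem phi_sup (x y : α) : phi S (x ⊔ y) = phi S x ⊔ phi S y := by
  rcases rle_total S x y with h | h
  · rw [phi_sup_of_rle S h, sup_eq_right.mpr (phi_mono_rle S h)]
  · rw [sup_comm x y, phi_sup_of_rle S h, sup_eq_left.mpr (phi_mono_rle S h)]

theorem phi_inf (x y : α) : phi S (x ⊓ y) = phi S x ⊓ phi S y := by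
  rcases rle_total S x y with h | h
  · rw [phi_inf_of_rle S h, inf_eq_left.mpr (phi_mono_rle S h)]
  · rw [inf_comm x y, phi_inf_of_rle S h, inf_eq_right.mpr (phi_mono_rle S h)]

end PhiReal

theorem additive_nsmul {f : α → ℝ} (hf : ∀ x y, f (x+y) = f x + f y) (x : α) (n : ℕ) :
    f (n • x) = n * f x := by
  induction n with
  | zero =>
    have h0 := hf 0 0
    rw [add_zero] at h0
    simp only [zero_smul, Nat.cast_zero, zero_mul]
    linarith
  | succ k ih =>
    rw [succ_nsmul, hf, ih]
    push_cast
    ring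

theorem nsmul_mem_solid {A : Set α} (hA : SolidIn A) {x : α} (hx : x ∈ A) (n : ℕ) :
    n • x ∈ A := by
  induction n with
  | zero => simpa using hA.1
  | succ k ih => rw [succ_nsmul]; exact hA.2.1 _ _ ih hx

/-- The separation theorem: enough real-valued lattice homomorphisms. -/
theorem separation {u : α} (hu0 : 0 ≤ u) (hstrong : ∀ x : α, ∃ n : ℕ, x ≤ n • u)
    (hArch : ∀ x y : α, (∀ n : ℕ, n • x ≤ y) → x ≤ 0)
    {a : α} (ha0 : 0 ≤ a) (hane : a ≠ 0) :
    ∃ φ : α → ℝ, (∀ x y, φ (x+y) = φ x + φ y) ∧ (∀ x y, φ (x ⊔ y) = φ x ⊔ φ y) ∧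
      (∀ x y, φ (x ⊓ y) = φ x ⊓ φ y) ∧ φ u = 1 ∧ 0 < φ a := by
  have hn0 : ∃ n : ℕ, ¬ (n • a ≤ u) := by
    by_contra hc
    push_neg at hc
    exact hane (le_antisymm (hArch a u hc) ha0)
  obtain ⟨n₀, hn₀⟩ := hn0
  have hn₀pos : 0 < n₀ := by
    rcases Nat.eq_zero_or_pos n₀ with rfl | h
    · exact absurd (by simpa using hu0) hn₀
    · exact h
  set b := (n₀ • a - u)⁺ with hb
  have hbne : b ≠ 0 := by
    rw [hb, Ne, posPart_eq_zero, sub_nonpos]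
    exact hn₀
  obtain ⟨M, hMsolid, hbM, hmax⟩ := exists_maximal_solid hbne
  have hprime := maximal_solid_prime hMsolid hbM hmax
  have huM : u ∉ M := by
    intro hu
    obtain ⟨K, hK⟩ := hstrong b
    refine hbM (hMsolid.mem_of_abs_le_of_nonneg (nsmul_mem_solid hMsolid hu K)
      (nsmul_nonneg hu0 K) ?_)
    rwa [abs_of_nonneg (posPart_nonneg _)]
  have S : Setup u M := ⟨hMsolid, hprime, huM, hu0, hstrong⟩
  refine ⟨phi S, phi_add S, phi_sup S, phi_inf S, phi_u S, ?_⟩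
  have hrle : rle M u (n₀ • a) := by
    rcases rle_total S (n₀ • a) u with h | h
    · exact absurd h hbM
    · exact h
  have h1 : 1 ≤ phi S (n₀ • a) := by
    have := phi_mono_rle S hrle
    rwa [phi_u S] at this
  rw [additive_nsmul (phi_add S) a n₀] at h1
  by_contra hc
  push_neg at hc
  have h2 : (n₀ : ℝ) * phi S a ≤ 0 := mul_nonpos_of_nonneg_of_nonpos (by positivity) hc
  exact absurd (h1.trans h2) (by norm_num)


/-! ## Assembly: the ring of bounded real functions on the hom space -/

def GoodHom (L : LuGroup.{v}) (p : L.G → ℝ) : Prop :=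
  (∀ x y, p (x + y) = p x + p y) ∧ (∀ x y, p (x ⊔ y) = p x ⊔ p y) ∧
  (∀ x y, p (x ⊓ y) = p x ⊓ p y) ∧ p L.u = 1

def Xsp (L : LuGroup.{v}) : Type v := {p : L.G → ℝ // GoodHom L p}

def Rsub (L : LuGroup.{v}) : Subring (Xsp L → ℝ) where
  carrier := {f | ∃ N : ℕ, ∀ p, |f p| ≤ (N : ℝ)}
  zero_mem' := ⟨0, fun p => by simp⟩
  one_mem' := ⟨1, fun p => by simp⟩
  add_mem' := by
    rintro f g ⟨N, hN⟩ ⟨N', hN'⟩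
    refine ⟨N + N', fun p => ?_⟩
    calc |(f + g) p| = |f p + g p| := rfl
    _ ≤ |f p| + |g p| := abs_add_le _ _
    _ ≤ (N : ℝ) + N' := add_le_add (hN p) (hN' p)
    _ = ((N + N' : ℕ) : ℝ) := by push_cast; ring
  neg_mem' := by
    rintro f ⟨N, hN⟩
    exact ⟨N, fun p => by simpa using hN p⟩
  mul_mem' := by
    rintro f g ⟨N, hN⟩ ⟨N', hN'⟩
    refine ⟨N * N', fun p => ?_⟩
    calc |(f * g) p| = |f p| * |g p| := abs_mul _ _
    _ ≤ (N : ℝ) * N' := mul_le_mul (hN p) (hN' p) (abs_nonneg _) (Nat.cast_nonneg N)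
    _ = ((N * N' : ℕ) : ℝ) := by push_cast; ring

instance (L : LuGroup.{v}) : Max ↥(Rsub L) :=
  ⟨fun f g => ⟨(f : Xsp L → ℝ) ⊔ g, by
    obtain ⟨N, hN⟩ := f.2
    obtain ⟨N', hN'⟩ := g.2
    refine ⟨N + N', fun p => ?_⟩
    have h1 : |(f : Xsp L → ℝ) p| ≤ ((N + N' : ℕ) : ℝ) :=
      (hN p).trans (by push_cast; linarith [Nat.cast_nonneg (α := ℝ) N'])
    have h2 : |(g : Xsp L → ℝ) p| ≤ ((N + N' : ℕ) : ℝ) :=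
      (hN' p).trans (by push_cast; linarith [Nat.cast_nonneg (α := ℝ) N])
    have he : ((f : Xsp L → ℝ) ⊔ g) p = (f : Xsp L → ℝ) p ⊔ (g : Xsp L → ℝ) p := rfl
    rw [he]
    rcases le_total ((f : Xsp L → ℝ) p) ((g : Xsp L → ℝ) p) with h | h
    · rw [sup_eq_right.mpr h]; exact h2
    · rw [sup_eq_left.mpr h]; exact h1⟩⟩

instance (L : LuGroup.{v}) : Min ↥(Rsub L) :=
  ⟨fun f g => ⟨(f : Xsp L → ℝ) ⊓ g, by
    obtain ⟨N, hN⟩ := f.2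
    obtain ⟨N', hN'⟩ := g.2
    refine ⟨N + N', fun p => ?_⟩
    have h1 : |(f : Xsp L → ℝ) p| ≤ ((N + N' : ℕ) : ℝ) :=
      (hN p).trans (by push_cast; linarith [Nat.cast_nonneg (α := ℝ) N'])
    have h2 : |(g : Xsp L → ℝ) p| ≤ ((N + N' : ℕ) : ℝ) :=
      (hN' p).trans (by push_cast; linarith [Nat.cast_nonneg (α := ℝ) N])
    have he : ((f : Xsp L → ℝ) ⊓ g) p = (f : Xsp L → ℝ) p ⊓ (g : Xsp L → ℝ) p := rfl
    rw [he]
    rcases le_total ((f : Xsp L → ℝ) p) ((g : Xsp L → ℝ) p) with h | h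
    · rw [inf_eq_left.mpr h]; exact h1
    · rw [inf_eq_right.mpr h]; exact h2⟩⟩

instance (L : LuGroup.{v}) : Lattice ↥(Rsub L) :=
  Subtype.coe_injective.lattice Subtype.val Iff.rfl Iff.rfl (fun _ _ => rfl) (fun _ _ => rfl)

theorem Rsub_le_iff (L : LuGroup.{v}) (a b : ↥(Rsub L)) :
    a ≤ b ↔ (a : Xsp L → ℝ) ≤ (b : Xsp L → ℝ) := Iff.rfl

theorem Rsub_coe_nsmul (L : LuGroup.{v}) (n : ℕ) (a : ↥(Rsub L)) :
    ((n • a : ↥(Rsub L)) : Xsp L → ℝ) = n • (a : Xsp L → ℝ) := by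
  induction n with
  | zero => simp
  | succ k ih => rw [succ_nsmul, succ_nsmul, ← ih]; rfl

/-- the bundled LuRing -/
def theRing (L : LuGroup.{v}) : LuRing.{v} where
  R := ↥(Rsub L)
  add_le_add := by
    intro a b c h
    rw [Rsub_le_iff] at h ⊢
    intro p
    exact add_le_add_right (h p) _
  one_nonneg := by
    rw [Rsub_le_iff]
    intro p
    show (0 : ℝ) ≤ (1 : Xsp L → ℝ) p
    norm_num
  one_strong := by
    intro x
    obtain ⟨N, hN⟩ := x.2
    refine ⟨N, ?_⟩
    rw [Rsub_le_iff, Rsub_coe_nsmul]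
    intro p
    have h1 : (x : Xsp L → ℝ) p ≤ N := (le_abs_self _).trans (hN p)
    calc (x : Xsp L → ℝ) p ≤ (N : ℝ) := h1
    _ = N • (1 : ℝ) := by simp
    _ = (N • ((1 : ↥(Rsub L)) : Xsp L → ℝ)) p := rfl
  mul_nonneg := by
    intro a b ha hb
    rw [Rsub_le_iff] at ha hb ⊢
    intro p
    exact mul_nonneg (ha p) (hb p)
  f_ring := by
    intro x y z hxy hz
    rw [Rsub_le_iff] at hz
    apply Subtype.ext
    funext p
    have hxyv : (x : Xsp L → ℝ) p ⊓ (y : Xsp L → ℝ) p = 0 := by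
      have h := congrArg (fun t : ↥(Rsub L) => (t : Xsp L → ℝ) p) hxy
      exact h
    have hx0 : (0:ℝ) ≤ (x : Xsp L → ℝ) p := hxyv.symm.le.trans inf_le_left
    have hy0 : (0:ℝ) ≤ (y : Xsp L → ℝ) p := hxyv.symm.le.trans inf_le_right
    have hz0 : (0:ℝ) ≤ (z : Xsp L → ℝ) p := hz p
    show ((z : Xsp L → ℝ) p * (x : Xsp L → ℝ) p) ⊓ ((y : Xsp L → ℝ) p) = 0
    rcases le_total ((x : Xsp L → ℝ) p) ((y : Xsp L → ℝ) p) with h | h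
    · have hxp : (x : Xsp L → ℝ) p = 0 := by rw [← hxyv, inf_eq_left.mpr h]
      rw [hxp, mul_zero]
      exact inf_eq_left.mpr hy0
    · have hyp : (y : Xsp L → ℝ) p = 0 := by rw [← hxyv, inf_eq_right.mpr h]
      rw [hyp]
      exact inf_eq_right.mpr (mul_nonneg hz0 hx0)

theorem Rsub_arch (L : LuGroup.{v}) (x y : ↥(Rsub L)) (h : ∀ n : ℕ, n • x ≤ y) : x ≤ 0 := by
  rw [Rsub_le_iff]
  intro p
  by_contra hc
  push_neg at hc
  have hc2 : (0:ℝ) < (x : Xsp L → ℝ) p := by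
    have : ((0 : ↥(Rsub L)) : Xsp L → ℝ) p = 0 := rfl
    rw [this] at hc
    exact hc
  obtain ⟨n, hn⟩ := Archimedean.arch ((y : Xsp L → ℝ) p) hc2
  have h2 := h (n+1)
  rw [Rsub_le_iff, Rsub_coe_nsmul] at h2
  have h3 : ((n+1 : ℕ) • (x : Xsp L → ℝ)) p ≤ (y : Xsp L → ℝ) p := h2 p
  have h4 : ((n+1 : ℕ)) • ((x : Xsp L → ℝ) p) ≤ (y : Xsp L → ℝ) p := h3
  have h5 := h4.trans hn
  rw [succ_nsmul] at h5
  have h6 : (x : Xsp L → ℝ) p ≤ 0 := by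
    rw [nsmul_eq_mul] at h5
    linarith
  linarith

theorem theRing_arch (L : LuGroup.{v}) : (theRing L).Arch := fun x y h => Rsub_arch L x y h

theorem goodHom_mono {L : LuGroup.{v}} (p : Xsp L) {x y : L.G} (h : x ≤ y) :
    p.val x ≤ p.val y := by
  have hs := p.2.2.1 x y
  rw [sup_eq_right.mpr h] at hs
  exact le_sup_left.trans hs.ge

theorem goodHom_zero {L : LuGroup.{v}} (p : Xsp L) : p.val 0 = 0 := by
  have := p.2.1 0 0
  rw [add_zero] at this
  linarith

theorem goodHom_neg {L : LuGroup.{v}} (p : Xsp L) (x : L.G) : p.val (-x) = - p.val x := by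
  have := p.2.1 x (-x)
  rw [add_neg_cancel, goodHom_zero] at this
  linarith

theorem goodHom_nsmul {L : LuGroup.{v}} (p : Xsp L) (x : L.G) (n : ℕ) :
    p.val (n • x) = n * p.val x := by
  haveI : AddLeftMono L.G := ⟨fun c a b h => L.add_le_add a b c h⟩
  exact additive_nsmul p.2.1 x n

end S14

open S14 in
/-- every Archimedean ℓu-group admits an injective group homomorphism into a
unital Archimedean ℓu-ring, preserving `⊔` and `⊓` and sending `u` to `1`. -/
theorem stmt14 (L : LuGroup.{u}) (hL : L.Arch) :
    ∃ (R : LuRing.{u}) (ε : L.G → R.R),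
      R.Arch ∧ Function.Injective ε ∧ LuGroupRingHom L R ε := by
  haveI : AddLeftMono L.G := ⟨fun c a b h => L.add_le_add a b c h⟩
  have hbd : ∀ g : L.G, (fun p : Xsp L => p.val g) ∈ Rsub L := by
    intro g
    obtain ⟨N1, hN1⟩ := L.u_strong g
    obtain ⟨N2, hN2⟩ := L.u_strong (-g)
    refine ⟨N1 + N2, fun p => ?_⟩
    have hu1 : p.val (N1 • L.u) = N1 := by rw [goodHom_nsmul p L.u N1, p.2.2.2.2, mul_one]
    have hu2 : p.val (N2 • L.u) = N2 := by rw [goodHom_nsmul p L.u N2, p.2.2.2.2, mul_one]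
    have h1 : p.val g ≤ N1 := hu1 ▸ goodHom_mono p hN1
    have h2 : - p.val g ≤ N2 := by
      have := goodHom_mono p hN2
      rw [goodHom_neg, hu2] at this
      exact this
    rw [abs_le]
    constructor
    · push_cast
      linarith [Nat.cast_nonneg (α := ℝ) N1]
    · push_cast
      linarith [Nat.cast_nonneg (α := ℝ) N2]
  refine ⟨theRing L, fun g => ⟨fun p => p.val g, hbd g⟩, theRing_arch L, ?_, ?_, ?_, ?_, ?_⟩
  · -- injectivity
    intro a b hab
    by_contra hne
    have hg : a - b ≠ 0 := sub_ne_zero.mpr hne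
    have habs : |a - b| ≠ 0 := by
      intro h0
      refine hg (le_antisymm ((le_abs_self _).trans h0.le) ?_)
      have h2 := (neg_le_abs (a - b)).trans h0.le
      exact neg_nonpos.mp h2
    obtain ⟨φ, hadd, hsup, hinf, hu, hpos⟩ :=
      separation L.u_nonneg L.u_strong hL (abs_nonneg (a - b)) habs
    set pt : Xsp L := ⟨φ, hadd, hsup, hinf, hu⟩ with hpt
    have h1 : φ a = φ b := by
      have := congrFun (congrArg Subtype.val hab) pt
      exact this
    have hzero : φ 0 = 0 := by
      have := hadd 0 0
      rw [add_zero] at this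
      linarith
    have hneg : ∀ x, φ (-x) = - φ x := by
      intro x
      have := hadd x (-x)
      rw [add_neg_cancel, hzero] at this
      linarith
    have hsub : φ (a - b) = 0 := by
      rw [sub_eq_add_neg, hadd, hneg, h1]
      ring
    have habs0 : φ |a - b| = 0 := by
      have he : |a - b| = (a - b) ⊔ (-(a - b)) := rfl
      rw [he, hsup, hsub, hneg, hsub]
      simp
    rw [habs0] at hpos
    exact lt_irrefl 0 hpos
  · intro x y
    exact Subtype.ext (funext fun p => p.2.1 x y)
  · intro x y
    exact Subtype.ext (funext fun p => p.2.2.1 x y)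
  · intro x y
    exact Subtype.ext (funext fun p => p.2.2.2.1 x y)
  · exact Subtype.ext (funext fun p => p.2.2.2.2)
end

section
/- Unital Archimedean ℓu-rings have the amalgamation property: if Z, A, B are unital Archimedean ℓu-rings and z_A : Z → A, z_B : Z → B are injective unital ℓu-ring morphisms, then there exist a unital Archimedean ℓu-ring E and injective unital ℓu-ring morphisms f_A : A → E and f_B : B → E with f_A ∘ z_A = f_B ∘ z_B. -/
universe u

namespace S15

instance (S : LuRing.{u}) : AddLeftMono S.R := ⟨fun c a b h => S.add_le_add a b c h⟩

instance (S : LuRing.{u}) : AddRightMono S.R :=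
  ⟨fun c a b h => by simpa [add_comm] using S.add_le_add a b c h⟩

variable {S : LuRing.{u}}

lemma nsmul_nn {a : S.R} (h : 0 ≤ a) (n : ℕ) : 0 ≤ n • a := by
  have := nsmul_le_nsmul_right h n; simpa using this

lemma one_le_zsmul_one {p : ℤ} (hp : 1 ≤ p) : (1 : S.R) ≤ p • (1 : S.R) := by
  have h0 : 0 ≤ ((p - 1).toNat) • (1 : S.R) := nsmul_nn S.one_nonneg _
  have : p • (1 : S.R) = (1 : ℤ) • (1 : S.R) + ((p - 1).toNat : ℤ) • (1 : S.R) := by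
    rw [← add_zsmul]; congr 1; omega
  rw [this, natCast_zsmul, one_zsmul]
  exact le_add_of_nonneg_right h0

lemma abs_le_unit (x : S.R) : ∃ n : ℕ, |x| ≤ n • (1 : S.R) := by
  obtain ⟨n, hn⟩ := S.one_strong x
  obtain ⟨m, hm⟩ := S.one_strong (-x)
  refine ⟨n + m, ?_⟩
  have h1 : x ≤ (n + m) • (1 : S.R) := by
    rw [add_nsmul]; exact hn.trans (le_add_of_nonneg_right (nsmul_nn S.one_nonneg _))
  have h2 : -x ≤ (n + m) • (1 : S.R) := by
    rw [add_nsmul]; exact hm.trans (le_add_of_nonneg_left (nsmul_nn S.one_nonneg _))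
  exact abs_le'.2 ⟨h1, h2⟩

lemma pp_add_le (a b : S.R) : (a + b)⁺ ≤ a⁺ + b⁺ := by
  rw [posPart_def]
  exact sup_le (add_le_add (le_posPart a) (le_posPart b))
    (add_nonneg (posPart_nonneg a) (posPart_nonneg b))

lemma pp_nsmul_le (n : ℕ) (a : S.R) : (n • a)⁺ ≤ n • a⁺ := by
  rw [posPart_def]
  exact sup_le (nsmul_le_nsmul_right (le_posPart a) n) (nsmul_nn (posPart_nonneg a) n)

lemma pp_add_nonneg_le (a m : S.R) (hm : 0 ≤ m) : (a + m)⁺ ≤ a⁺ + m := by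
  rw [posPart_def]
  exact sup_le (add_le_add_left (le_posPart a) m)
    (add_nonneg (posPart_nonneg a) hm)

lemma pp_mono_le {a b : S.R} (h : a ≤ b) : a⁺ ≤ b⁺ := posPart_mono h

lemma inf_add_le3 {a b c : S.R} (ha : 0 ≤ a) (hb : 0 ≤ b) (hc : 0 ≤ c) :
    a ⊓ (b + c) ≤ a ⊓ b + a ⊓ c := by
  have e1 : a ⊓ b + a ⊓ c = ((a ⊓ b) + a) ⊓ ((a ⊓ b) + c) := add_inf _ _ _
  have e2 : (a ⊓ b) + a = (a + a) ⊓ (a + b) := by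
    rw [add_comm (a ⊓ b) a, add_inf]
  have e3 : (a ⊓ b) + c = (a + c) ⊓ (b + c) := by
    rw [add_comm (a ⊓ b) c, add_inf, add_comm c a, add_comm c b]
  rw [e1, e2, e3]
  refine le_inf (le_inf ?_ ?_) (le_inf ?_ ?_)
  · exact (inf_le_left).trans (le_add_of_nonneg_right ha)
  · exact (inf_le_left).trans (le_add_of_nonneg_right hb)
  · exact (inf_le_left).trans (le_add_of_nonneg_right hc)
  · exact inf_le_right

lemma inf_nsmul_zero {a b : S.R} (ha : 0 ≤ a) (hb : 0 ≤ b) (h : a ⊓ b = 0) (n : ℕ) :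
    a ⊓ (n • b) = 0 := by
  induction n with
  | zero => simpa using ha
  | succ k ih =>
      have h1 : a ⊓ ((k + 1) • b) ≤ a ⊓ (k • b) + a ⊓ b := by
        rw [succ_nsmul]
        exact inf_add_le3 ha (nsmul_nn hb k) hb
      have h2 : a ⊓ ((k + 1) • b) ≤ 0 := by rw [ih, h] at h1; simpa using h1
      exact le_antisymm h2 (le_inf ha (nsmul_nn hb _))

lemma pp_le_of_nsmul_le {n : ℕ} (hn : 0 < n) {z m : S.R} (h : n • z ≤ m) : z⁺ ≤ m⁺ := by
  obtain ⟨k, rfl⟩ : ∃ k, n = k + 1 := ⟨n - 1, by omega⟩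
  have hz : z ≤ m + k • z⁻ := by
    have h1 : z + k • z ≤ m := by rwa [succ_nsmul, add_comm] at h
    have h2 : -(k • z) ≤ k • z⁻ := by
      rw [← smul_neg]; exact nsmul_le_nsmul_right (neg_le_negPart z) k
    calc z = (z + k • z) + -(k • z) := by abel
    _ ≤ m + k • z⁻ := add_le_add h1 h2
  have h3 : z⁺ ≤ m⁺ + k • z⁻ := by
    rw [posPart_def]
    exact sup_le (hz.trans (add_le_add_left (le_posPart m) _))
      (add_nonneg (posPart_nonneg m) (nsmul_nn (negPart_nonneg z) k))
  have h4 : z⁺ = z⁺ ⊓ (m⁺ + k • z⁻) := (inf_eq_left.2 h3).symm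
  have h5 : z⁺ ⊓ (m⁺ + k • z⁻) ≤ z⁺ ⊓ m⁺ + z⁺ ⊓ (k • z⁻) :=
    inf_add_le3 (posPart_nonneg z) (posPart_nonneg m) (nsmul_nn (negPart_nonneg z) k)
  have h6 : z⁺ ⊓ (k • z⁻) = 0 :=
    inf_nsmul_zero (posPart_nonneg z) (negPart_nonneg z) (posPart_inf_negPart_eq_zero z) k
  calc z⁺ = z⁺ ⊓ (m⁺ + k • z⁻) := h4
  _ ≤ z⁺ ⊓ m⁺ + z⁺ ⊓ (k • z⁻) := h5
  _ = z⁺ ⊓ m⁺ := by rw [h6, add_zero]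
  _ ≤ m⁺ := inf_le_right

lemma sup_sub_self (x y : S.R) : x ⊔ y - y = (x - y)⁺ := by
  rw [posPart_def]
  have : x ⊔ y - y = (x - y) ⊔ (y - y) := by
    rw [sub_eq_add_neg, sub_eq_add_neg, sub_eq_add_neg, add_comm (x ⊔ y) (-y), add_sup,
      add_comm (-y) x, add_comm (-y) y]
  rw [this, sub_self]

lemma eq_zero_of_abs_nonpos {a : S.R} (h : |a| ≤ 0) : a = 0 := by
  have h1 : a ≤ 0 := (le_abs_self a).trans h
  have h2 : -a ≤ 0 := (neg_le_abs a).trans h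
  exact le_antisymm h1 (by simpa using h2)

/-- A solid subgroup ("ℓ-ideal") of the additive group of `S`. -/
structure IsSolid (S : LuRing.{u}) (M : Set S.R) : Prop where
  zero : (0 : S.R) ∈ M
  add : ∀ {x y : S.R}, x ∈ M → y ∈ M → x + y ∈ M
  solid : ∀ {x y : S.R}, y ∈ M → |x| ≤ |y| → x ∈ M

namespace IsSolid

variable {M : Set S.R}

lemma abs_mem (hM : IsSolid S M) {x : S.R} (hx : x ∈ M) : |x| ∈ M :=
  hM.solid hx (by rw [abs_abs])

lemma neg_mem (hM : IsSolid S M) {x : S.R} (hx : x ∈ M) : -x ∈ M :=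
  hM.solid hx (by rw [abs_neg])

lemma mem_of_nonneg_le (hM : IsSolid S M) {x y : S.R} (hy : y ∈ M) (hx : 0 ≤ x)
    (hxy : x ≤ y) : x ∈ M :=
  hM.solid hy ((abs_of_nonneg hx).le.trans (hxy.trans (le_abs_self y)))

lemma nsmul_mem (hM : IsSolid S M) {x : S.R} (hx : x ∈ M) (n : ℕ) : n • x ∈ M := by
  induction n with
  | zero => simpa using hM.zero
  | succ k ih => rw [succ_nsmul]; exact hM.add ih hx

lemma sub_mem (hM : IsSolid S M) {x y : S.R} (hx : x ∈ M) (hy : y ∈ M) : x - y ∈ M := by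
  rw [sub_eq_add_neg]; exact hM.add hx (hM.neg_mem hy)

end IsSolid

/-- existence of a solid set maximal with respect to avoiding `d`. -/
lemma exists_maximal_solid (M₀ : Set S.R) (h₀ : IsSolid S M₀) (d : S.R) (hd : d ∉ M₀) :
    ∃ M : Set S.R, IsSolid S M ∧ M₀ ⊆ M ∧ d ∉ M ∧
      ∀ J : Set S.R, IsSolid S J → M ⊆ J → d ∉ J → J ⊆ M := by
  set 𝒮 : Set (Set S.R) := {J | IsSolid S J ∧ M₀ ⊆ J ∧ d ∉ J} with h𝒮
  have hzorn : ∀ c ⊆ 𝒮, IsChain (· ⊆ ·) c → c.Nonempty → ∃ ub ∈ 𝒮, ∀ s ∈ c, s ⊆ ub := by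
    intro c hc hchain hne
    refine ⟨⋃₀ c, ⟨?_, ?_, ?_⟩, fun s hs => Set.subset_sUnion_of_mem hs⟩
    · constructor
      · obtain ⟨J, hJ⟩ := hne; exact Set.mem_sUnion.2 ⟨J, hJ, (hc hJ).1.zero⟩
      · intro x y hx hy
        obtain ⟨J1, hJ1, hx1⟩ := hx
        obtain ⟨J2, hJ2, hy2⟩ := hy
        rcases hchain.total hJ1 hJ2 with h | h
        · exact Set.mem_sUnion.2 ⟨J2, hJ2, (hc hJ2).1.add (h hx1) hy2⟩
        · exact Set.mem_sUnion.2 ⟨J1, hJ1, (hc hJ1).1.add hx1 (h hy2)⟩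
      · intro x y hy hxy
        obtain ⟨J, hJ, hyJ⟩ := hy
        exact Set.mem_sUnion.2 ⟨J, hJ, (hc hJ).1.solid hyJ hxy⟩
    · obtain ⟨J, hJ⟩ := hne; exact ((hc hJ).2.1).trans (Set.subset_sUnion_of_mem hJ)
    · intro hdm
      obtain ⟨J, hJ, hdJ⟩ := hdm
      exact (hc hJ).2.2 hdJ
  obtain ⟨M, hM0, hMmax⟩ := zorn_subset_nonempty 𝒮 hzorn M₀ ⟨h₀, le_refl _, hd⟩
  exact ⟨M, hMmax.prop.1, hM0, hMmax.prop.2.2,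
    fun J hJ hMJ hdJ => hMmax.le_of_ge ⟨hJ, hM0.trans hMJ, hdJ⟩ hMJ⟩

/-- A maximal solid set avoiding some element is "prime": every element has its positive
or negative part inside. -/
lemma prime_of_maximal {M : Set S.R} (hM : IsSolid S M) (d : S.R) (hdM : d ∉ M)
    (hmax : ∀ J : Set S.R, IsSolid S J → M ⊆ J → d ∉ J → J ⊆ M) :
    ∀ x : S.R, x⁺ ∈ M ∨ x⁻ ∈ M := by
  intro x
  by_contra hcon
  push_neg at hcon
  obtain ⟨hxp, hxn⟩ := hcon
  -- the solid set generated by M and a nonnegative element a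
  have gen : ∀ a : S.R, 0 ≤ a → a ∉ M →
      ∃ m ∈ M, ∃ n : ℕ, 0 ≤ m ∧ |d| ≤ m + n • a := by
    intro a ha haM
    set J : Set S.R := {y | ∃ m ∈ M, ∃ n : ℕ, 0 ≤ m ∧ |y| ≤ m + n • a} with hJdef
    have hJsolid : IsSolid S J := by
      constructor
      · exact ⟨0, hM.zero, 0, le_refl _, by simpa using abs_nonneg (0 : S.R)⟩
      · rintro x' y' ⟨m1, hm1, n1, hm1n, h1⟩ ⟨m2, hm2, n2, hm2n, h2⟩
        refine ⟨m1 + m2, hM.add hm1 hm2, n1 + n2, add_nonneg hm1n hm2n, ?_⟩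
        calc |x' + y'| ≤ |x'| + |y'| := abs_add_le x' y'
        _ ≤ (m1 + n1 • a) + (m2 + n2 • a) := add_le_add h1 h2
        _ = m1 + m2 + (n1 + n2) • a := by rw [add_nsmul]; abel
      · rintro x' y' ⟨m1, hm1, n1, hm1n, h1⟩ hle
        exact ⟨m1, hm1, n1, hm1n, hle.trans h1⟩
    have hMJ : M ⊆ J := by
      intro y hy
      exact ⟨|y|, hM.abs_mem hy, 0, abs_nonneg y, by simp [le_abs_self]⟩
    have haJ : a ∈ J := by
      refine ⟨0, hM.zero, 1, le_refl _, ?_⟩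
      rw [abs_of_nonneg ha, one_nsmul, zero_add]
    have hdJ : d ∈ J := by
      by_contra hdJ
      exact haM (hmax J hJsolid hMJ hdJ haJ)
    obtain ⟨m, hm, n, hmn, hle⟩ := hdJ
    exact ⟨m, hm, n, hmn, hle⟩
  obtain ⟨m1, hm1, n1, hm1n, h1⟩ := gen x⁺ (posPart_nonneg x) hxp
  obtain ⟨m2, hm2, n2, hm2n, h2⟩ := gen x⁻ (negPart_nonneg x) hxn
  have key : |d| ≤ m1 + m2 := by
    have hinf : (n1 • x⁺) ⊓ (n2 • x⁻) = 0 := by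
      have e1 : x⁻ ⊓ (n1 • x⁺) = 0 := by
        refine inf_nsmul_zero (negPart_nonneg x) (posPart_nonneg x) ?_ n1
        rw [inf_comm]; exact posPart_inf_negPart_eq_zero x
      have e2 : (n1 • x⁺) ⊓ (n2 • x⁻) = 0 := by
        refine inf_nsmul_zero (nsmul_nn (posPart_nonneg x) n1) (negPart_nonneg x) ?_ n2
        rw [inf_comm]; exact e1
      exact e2
    calc |d| = |d| ⊓ |d| := (inf_idem _).symm
    _ ≤ (m1 + n1 • x⁺) ⊓ (m2 + n2 • x⁻) := inf_le_inf h1 h2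
    _ ≤ (m1 + m2 + n1 • x⁺) ⊓ (m1 + m2 + n2 • x⁻) := by
        refine inf_le_inf ?_ ?_
        · exact add_le_add_left (le_add_of_nonneg_right hm2n) _
        · exact add_le_add_left (le_add_of_nonneg_left hm1n) _
    _ = m1 + m2 + (n1 • x⁺) ⊓ (n2 • x⁻) := (add_inf _ _ _).symm
    _ = m1 + m2 := by rw [hinf, add_zero]
  have : d ∈ M := by
    refine hM.solid (hM.add hm1 hm2) ?_
    rwa [abs_of_nonneg (add_nonneg hm1n hm2n)]
  exact hdM this

section ZsmulHelpers

lemma zsmul_mono {q : ℤ} (hq : 0 ≤ q) {x y : S.R} (h : x ≤ y) : q • x ≤ q • y := by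
  lift q to ℕ using hq
  rw [natCast_zsmul, natCast_zsmul]
  exact nsmul_le_nsmul_right h _

lemma zsmul_nn {q : ℤ} (hq : 0 ≤ q) {x : S.R} (h : 0 ≤ x) : 0 ≤ q • x := by
  simpa using zsmul_mono hq h

lemma IsSolid.zsmul_mem {M : Set S.R} (hM : IsSolid S M) {x : S.R} (hx : x ∈ M)
    {q : ℤ} (hq : 0 ≤ q) : q • x ∈ M := by
  lift q to ℕ using hq
  rw [natCast_zsmul]
  exact hM.nsmul_mem hx _

lemma pp_zsmul_le {q : ℤ} (hq : 0 ≤ q) (a : S.R) : (q • a)⁺ ≤ q • a⁺ := by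
  rw [posPart_def]
  exact sup_le (zsmul_mono hq (le_posPart a)) (zsmul_nn hq (posPart_nonneg a))

lemma pp_zsmul_mem {M : Set S.R} (hM : IsSolid S M) {a : S.R} (ha : a⁺ ∈ M)
    {q : ℤ} (hq : 0 ≤ q) : (q • a)⁺ ∈ M :=
  hM.mem_of_nonneg_le (hM.zsmul_mem ha hq) (posPart_nonneg _) (pp_zsmul_le hq a)

end ZsmulHelpers

section Phi

variable (M : Set S.R)

/-- `p/q ≤ x` modulo `M`. -/
def ratLe (p q : ℤ) (x : S.R) : Prop := (p • (1 : S.R) - q • x)⁺ ∈ M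

/-- `x ≤ p/q` modulo `M`. -/
def ratGe (p q : ℤ) (x : S.R) : Prop := (q • x - p • (1 : S.R))⁺ ∈ M

/-- the lower cut of `x` modulo `M`. -/
def cut (x : S.R) : Set ℝ :=
  {r | ∃ p q : ℤ, 0 < q ∧ r = (p : ℝ) / (q : ℝ) ∧ ratLe M p q x}

/-- the real number associated to `x` modulo `M`. -/
noncomputable def phi (x : S.R) : ℝ := sSup (cut M x)

variable {M}

lemma ratLe_of_le (hM : IsSolid S M) {x y : S.R} (hxy : x ≤ y) {p q : ℤ} (hq : 0 ≤ q)
    (h : ratLe M p q x) : ratLe M p q y := by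
  refine hM.mem_of_nonneg_le h (posPart_nonneg _) (pp_mono_le ?_)
  have := zsmul_mono hq hxy
  exact sub_le_sub_left this _

lemma exists_ratLe (hM : IsSolid S M) (x : S.R) : ∃ N : ℕ, ratLe M (-(N : ℤ)) 1 x := by
  obtain ⟨N, hN⟩ := S.one_strong (-x)
  refine ⟨N, ?_⟩
  unfold ratLe
  show ((-(N : ℤ)) • (1 : S.R) - (1 : ℤ) • x)⁺ ∈ M
  have key : (-(N : ℤ)) • (1 : S.R) - (1 : ℤ) • x = -((N • (1 : S.R)) + x) := by module
  have h0 : (-(N : ℤ)) • (1 : S.R) - (1 : ℤ) • x ≤ 0 := by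
    rw [key, neg_nonpos]
    calc (0 : S.R) = -x + x := by abel
    _ ≤ N • (1 : S.R) + x := add_le_add_left hN x
  rw [posPart_eq_zero.2 h0]; exact hM.zero

lemma exists_ratGe (hM : IsSolid S M) (x : S.R) : ∃ N : ℕ, ratGe M (N : ℤ) 1 x := by
  obtain ⟨N, hN⟩ := S.one_strong x
  refine ⟨N, ?_⟩
  unfold ratGe
  show ((1 : ℤ) • x - (N : ℤ) • (1 : S.R))⁺ ∈ M
  have key : (1 : ℤ) • x - (N : ℤ) • (1 : S.R) = x - N • (1 : S.R) := by module
  have h0 : (1 : ℤ) • x - (N : ℤ) • (1 : S.R) ≤ 0 := by rw [key, sub_nonpos]; exact hN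
  rw [posPart_eq_zero.2 h0]; exact hM.zero

/-- If `p/q ≤ x ≤ p'/q'` mod `M`, then `p/q ≤ p'/q'` as rationals. -/
lemma ratLe_le_ratGe (hM : IsSolid S M) (h1 : (1 : S.R) ∉ M) {x : S.R} {p q p' q' : ℤ} (hq : 0 < q) (hq' : 0 < q')
    (hle : ratLe M p q x) (hge : ratGe M p' q' x) : p * q' ≤ p' * q := by
  by_contra hcon
  push_neg at hcon
  have hcoef : 1 ≤ q' * p - q * p' := by nlinarith
  have key : (q' * p - q * p') • (1 : S.R) =
      q' • (p • (1 : S.R) - q • x) + q • (q' • x - p' • (1 : S.R)) := by module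
  have hmem : q' • (p • (1 : S.R) - q • x)⁺ + q • (q' • x - p' • (1 : S.R))⁺ ∈ M :=
    hM.add (hM.zsmul_mem hle hq'.le) (hM.zsmul_mem hge hq.le)
  have hle2 : (q' * p - q * p') • (1 : S.R) ≤
      q' • (p • (1 : S.R) - q • x)⁺ + q • (q' • x - p' • (1 : S.R))⁺ := by
    rw [key]
    exact add_le_add (zsmul_mono hq'.le (le_posPart _)) (zsmul_mono hq.le (le_posPart _))
  have hone : (1 : S.R) ≤ q' • (p • (1 : S.R) - q • x)⁺ + q • (q' • x - p' • (1 : S.R))⁺ :=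
    (one_le_zsmul_one hcoef).trans hle2
  exact h1 (hM.mem_of_nonneg_le hmem S.one_nonneg hone)

lemma cut_nonempty (hM : IsSolid S M) (x : S.R) : (cut M x).Nonempty := by
  obtain ⟨N, hN⟩ := exists_ratLe (M := M) hM x
  exact ⟨(-(N : ℤ) : ℤ) / (1 : ℤ), ⟨-(N : ℤ), 1, one_pos, by push_cast; ring, hN⟩⟩

lemma cut_bddAbove (hM : IsSolid S M) (h1 : (1 : S.R) ∉ M) (x : S.R) : BddAbove (cut M x) := by
  obtain ⟨N, hN⟩ := exists_ratGe (M := M) hM x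
  refine ⟨(N : ℝ), ?_⟩
  rintro r ⟨p, q, hq, rfl, hle⟩
  have h := ratLe_le_ratGe hM h1 hq one_pos hle hN
  rw [div_le_iff₀ (by exact_mod_cast hq)]
  calc ((p : ℝ)) = ((p * 1 : ℤ) : ℝ) := by push_cast; ring
  _ ≤ (((N : ℤ) * q : ℤ) : ℝ) := by exact_mod_cast h
  _ = (N : ℝ) * (q : ℝ) := by push_cast; ring

lemma ratLe_le_phi (hM : IsSolid S M) (h1 : (1 : S.R) ∉ M) {x : S.R} {p q : ℤ} (hq : 0 < q) (h : ratLe M p q x) :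
    (p : ℝ) / (q : ℝ) ≤ phi M x :=
  le_csSup (cut_bddAbove hM h1 x) ⟨p, q, hq, rfl, h⟩

lemma phi_le_ratGe (hM : IsSolid S M) (h1 : (1 : S.R) ∉ M) {x : S.R} {p q : ℤ} (hq : 0 < q) (h : ratGe M p q x) :
    phi M x ≤ (p : ℝ) / (q : ℝ) := by
  refine csSup_le (cut_nonempty hM x) ?_
  rintro r ⟨p', q', hq', rfl, hle⟩
  have hpq := ratLe_le_ratGe hM h1 hq' hq hle h
  rw [div_le_div_iff₀ (by exact_mod_cast hq') (by exact_mod_cast hq)]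
  exact_mod_cast hpq

lemma ratLe_total (hpr : ∀ x : S.R, x⁺ ∈ M ∨ x⁻ ∈ M) (p q : ℤ) (x : S.R) :
    ratLe M p q x ∨ ratGe M p q x := by
  rcases hpr (p • (1 : S.R) - q • x) with h | h
  · exact Or.inl h
  · right
    unfold ratGe
    have e : q • x - p • (1 : S.R) = -(p • (1 : S.R) - q • x) := (neg_sub _ _).symm
    rw [e, posPart_def, ← negPart_def]
    exact h

lemma exists_approx (hM : IsSolid S M) (h1 : (1 : S.R) ∉ M)
    (hpr : ∀ x : S.R, x⁺ ∈ M ∨ x⁻ ∈ M) (x : S.R) {k : ℤ} (hk : 0 < k) :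
    ∃ p : ℤ, ratLe M p k x ∧ ratGe M (p + 1) k x := by
  obtain ⟨N, hN⟩ := exists_ratGe (M := M) hM x
  obtain ⟨N', hN'⟩ := exists_ratLe (M := M) hM x
  have hbdd : ∃ b : ℤ, ∀ z : ℤ, ratLe M z k x → z ≤ b := by
    refine ⟨(N : ℤ) * k, fun z hz => ?_⟩
    have := ratLe_le_ratGe hM h1 hk one_pos hz hN
    nlinarith
  have hinh : ∃ z : ℤ, ratLe M z k x := by
    refine ⟨-(N' : ℤ) * k, ?_⟩
    have key : (-(N' : ℤ) * k) • (1 : S.R) - k • x =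
        k • ((-(N' : ℤ)) • (1 : S.R) - (1 : ℤ) • x) := by module
    unfold ratLe
    rw [key]
    exact pp_zsmul_mem hM hN' hk.le
  obtain ⟨p, hp, hpmax⟩ := Int.exists_greatest_of_bdd hbdd hinh
  refine ⟨p, hp, ?_⟩
  rcases ratLe_total (M := M) hpr (p + 1) k x with h | h
  · exact absurd (hpmax _ h) (by omega)
  · exact h

lemma ratLe_add (hM : IsSolid S M) {x y : S.R} {p q k : ℤ} (hp : ratLe M p k x) (hq : ratLe M q k y) :
    ratLe M (p + q) k (x + y) := by
  unfold ratLe at *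
  have key : (p + q) • (1 : S.R) - k • (x + y) =
      (p • (1 : S.R) - k • x) + (q • (1 : S.R) - k • y) := by module
  rw [key]
  exact hM.mem_of_nonneg_le (hM.add hp hq) (posPart_nonneg _) (pp_add_le _ _)

lemma ratGe_add (hM : IsSolid S M) {x y : S.R} {p q k : ℤ} (hp : ratGe M p k x) (hq : ratGe M q k y) :
    ratGe M (p + q) k (x + y) := by
  unfold ratGe at *
  have key : k • (x + y) - (p + q) • (1 : S.R) =
      (k • x - p • (1 : S.R)) + (k • y - q • (1 : S.R)) := by module
  rw [key]
  exact hM.mem_of_nonneg_le (hM.add hp hq) (posPart_nonneg _) (pp_add_le _ _)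

lemma eq_of_forall_int_close {u v : ℝ} (h : ∀ k : ℤ, 0 < k → |u - v| ≤ 2 / k) : u = v := by
  by_contra hne
  have hpos : 0 < |u - v| := abs_pos.2 (sub_ne_zero.2 hne)
  obtain ⟨n, hn⟩ := exists_nat_gt (2 / |u - v|)
  have hn0 : 0 < (n : ℝ) := lt_of_le_of_lt (by positivity) hn
  have hk : (0 : ℤ) < (n : ℤ) := by exact_mod_cast hn0
  have h2 := h n hk
  have h3 : 2 / (n : ℝ) < |u - v| := by
    rw [div_lt_iff₀ hn0]
    calc (2 : ℝ) = (2 / |u - v|) * |u - v| := by field_simp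
    _ < (n : ℝ) * |u - v| := by exact mul_lt_mul_of_pos_right hn hpos
    _ = |u - v| * n := by ring
  rw [show (((n : ℤ) : ℝ)) = (n : ℝ) by push_cast; ring] at h2
  linarith

lemma phi_add (hM : IsSolid S M) (h1 : (1 : S.R) ∉ M)
    (hpr : ∀ x : S.R, x⁺ ∈ M ∨ x⁻ ∈ M) (x y : S.R) : phi M (x + y) = phi M x + phi M y := by
  refine (eq_of_forall_int_close fun k hk => ?_).symm
  obtain ⟨p, hp1, hp2⟩ := exists_approx hM h1 hpr x hk
  obtain ⟨q, hq1, hq2⟩ := exists_approx hM h1 hpr y hk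
  have hkR : (0 : ℝ) < (k : ℝ) := by exact_mod_cast hk
  have bx1 := ratLe_le_phi hM h1 hk hp1
  have bx2 := phi_le_ratGe hM h1 hk hp2
  have by1 := ratLe_le_phi hM h1 hk hq1
  have by2 := phi_le_ratGe hM h1 hk hq2
  have bs1 := ratLe_le_phi hM h1 hk (ratLe_add hM hp1 hq1)
  have bs2 := phi_le_ratGe hM h1 hk (ratGe_add hM hp2 hq2)
  have hb1 : (p : ℝ) ≤ phi M x * k := by
    have := (div_le_iff₀ hkR).1 bx1; exact this
  have hb2 : phi M x * k ≤ (p : ℝ) + 1 := by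
    have := (le_div_iff₀ hkR).1 bx2; push_cast at this; linarith
  have hb3 : (q : ℝ) ≤ phi M y * k := (div_le_iff₀ hkR).1 by1
  have hb4 : phi M y * k ≤ (q : ℝ) + 1 := by
    have := (le_div_iff₀ hkR).1 by2; push_cast at this; linarith
  have hb5 : (p : ℝ) + q ≤ phi M (x + y) * k := by
    have := (div_le_iff₀ hkR).1 bs1; push_cast at this; linarith
  have hb6 : phi M (x + y) * k ≤ (p : ℝ) + q + 2 := by
    have := (le_div_iff₀ hkR).1 bs2; push_cast at this; linarith
  rw [abs_le]
  constructor
  · rw [neg_le, neg_sub, le_div_iff₀ hkR]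
    nlinarith
  · rw [le_div_iff₀ hkR]
    nlinarith

lemma ratLe_self_one (hM : IsSolid S M) : ratLe M 1 1 (1 : S.R) := by
  unfold ratLe
  show ((1 : ℤ) • (1 : S.R) - (1 : ℤ) • (1 : S.R))⁺ ∈ M
  have h0 : (1 : ℤ) • (1 : S.R) - (1 : ℤ) • (1 : S.R) ≤ 0 := by
    rw [sub_self]
  rw [posPart_eq_zero.2 h0]; exact hM.zero

lemma ratGe_self_one (hM : IsSolid S M) : ratGe M 1 1 (1 : S.R) := by
  unfold ratGe
  show ((1 : ℤ) • (1 : S.R) - (1 : ℤ) • (1 : S.R))⁺ ∈ M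
  have h0 : (1 : ℤ) • (1 : S.R) - (1 : ℤ) • (1 : S.R) ≤ 0 := by rw [sub_self]
  rw [posPart_eq_zero.2 h0]; exact hM.zero

lemma phi_one (hM : IsSolid S M) (h1 : (1 : S.R) ∉ M) : phi M 1 = 1 := by
  have hle := ratLe_le_phi hM h1 one_pos (ratLe_self_one hM)
  have hge := phi_le_ratGe hM h1 one_pos (ratGe_self_one hM)
  norm_num at hle hge
  linarith

lemma phi_mono (hM : IsSolid S M) (h1 : (1 : S.R) ∉ M) {x y : S.R} (hxy : x ≤ y) :
    phi M x ≤ phi M y := by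
  refine csSup_le_csSup (cut_bddAbove hM h1 y) (cut_nonempty hM x) ?_
  rintro r ⟨p, q, hq, rfl, hle⟩
  exact ⟨p, q, hq, rfl, ratLe_of_le hM hxy hq.le hle⟩

lemma negPart_sub' (x y : S.R) : (x - y)⁻ = (y - x)⁺ := by
  rw [negPart_def, posPart_def, neg_sub]

lemma phi_sup_aux (hM : IsSolid S M) (h1 : (1 : S.R) ∉ M) (x y : S.R)
    (h : (x - y)⁺ ∈ M) : phi M (x ⊔ y) = phi M y ∧ phi M x ≤ phi M y := by
  have key1 : ∀ p q : ℤ, 0 < q → ratLe M p q x → ratLe M p q y := by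
    intro p q hq hle
    unfold ratLe at *
    have e : p • (1 : S.R) - q • y = (p • (1 : S.R) - q • x) + q • (x - y) := by module
    have hb : p • (1 : S.R) - q • y ≤ (p • (1 : S.R) - q • x)⁺ + q • (x - y)⁺ := by
      rw [e]
      exact add_le_add (le_posPart _) (zsmul_mono hq.le (le_posPart _))
    have hmem : (p • (1 : S.R) - q • x)⁺ + q • (x - y)⁺ ∈ M :=
      hM.add hle (hM.zsmul_mem h hq.le)
    refine hM.mem_of_nonneg_le hmem (posPart_nonneg _) ?_
    rw [posPart_def]
    exact sup_le hb (add_nonneg (posPart_nonneg _) (zsmul_nn hq.le (posPart_nonneg _)))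
  have key2 : ∀ p q : ℤ, 0 < q → ratLe M p q (x ⊔ y) → ratLe M p q y := by
    intro p q hq hle
    unfold ratLe at *
    have e : p • (1 : S.R) - q • y = (p • (1 : S.R) - q • (x ⊔ y)) + q • ((x ⊔ y) - y) := by
      module
    rw [sup_sub_self] at e
    have hmem : (p • (1 : S.R) - q • (x ⊔ y))⁺ + q • (x - y)⁺ ∈ M :=
      hM.add hle (hM.zsmul_mem h hq.le)
    refine hM.mem_of_nonneg_le hmem (posPart_nonneg _) ?_
    rw [e]
    exact pp_add_nonneg_le _ _ (zsmul_nn hq.le (posPart_nonneg _))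
  constructor
  · refine le_antisymm ?_ (phi_mono hM h1 le_sup_right)
    refine csSup_le_csSup (cut_bddAbove hM h1 y) (cut_nonempty hM (x ⊔ y)) ?_
    rintro r ⟨p, q, hq, rfl, hle⟩
    exact ⟨p, q, hq, rfl, key2 p q hq hle⟩
  · refine csSup_le_csSup (cut_bddAbove hM h1 y) (cut_nonempty hM x) ?_
    rintro r ⟨p, q, hq, rfl, hle⟩
    exact ⟨p, q, hq, rfl, key1 p q hq hle⟩

lemma phi_sup (hM : IsSolid S M) (h1 : (1 : S.R) ∉ M)
    (hpr : ∀ x : S.R, x⁺ ∈ M ∨ x⁻ ∈ M) (x y : S.R) :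
    phi M (x ⊔ y) = phi M x ⊔ phi M y := by
  rcases hpr (x - y) with h | h
  · obtain ⟨he, hle⟩ := phi_sup_aux hM h1 x y h
    rw [he, sup_eq_right.2 hle]
  · rw [negPart_sub'] at h
    obtain ⟨he, hle⟩ := phi_sup_aux hM h1 y x h
    rw [sup_comm x y, he, sup_comm (phi M x) (phi M y), sup_eq_right.2 hle]

lemma phi_inf (hM : IsSolid S M) (h1 : (1 : S.R) ∉ M)
    (hpr : ∀ x : S.R, x⁺ ∈ M ∨ x⁻ ∈ M) (x y : S.R) :
    phi M (x ⊓ y) = phi M x ⊓ phi M y := by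
  have e1 : phi M (x ⊓ y + (x ⊔ y)) = phi M (x ⊓ y) + phi M (x ⊔ y) :=
    phi_add hM h1 hpr _ _
  rw [inf_add_sup, phi_add hM h1 hpr, phi_sup hM h1 hpr] at e1
  have : phi M x ⊓ phi M y + (phi M x ⊔ phi M y) = phi M x + phi M y := inf_add_sup _ _
  linarith [e1, this]

lemma phi_mem_zero (hM : IsSolid S M) (h1 : (1 : S.R) ∉ M) {m : S.R} (hm : m ∈ M) :
    phi M m = 0 := by
  have hupper : phi M m ≤ 0 := by
    refine csSup_le (cut_nonempty hM m) ?_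
    rintro r ⟨p, q, hq, rfl, hle⟩
    have hp : p ≤ 0 := by
      by_contra hp
      push_neg at hp
      have hp1 : 1 ≤ p := hp
      have habs : m ≤ |m| := le_abs_self m
      have hb : p • (1 : S.R) ≤ (p • (1 : S.R) - q • m)⁺ + q • |m| := by
        calc p • (1 : S.R) = (p • (1 : S.R) - q • m) + q • m := by module
        _ ≤ (p • (1 : S.R) - q • m)⁺ + q • |m| :=
            add_le_add (le_posPart _) (zsmul_mono hq.le habs)
      have hmem : (p • (1 : S.R) - q • m)⁺ + q • |m| ∈ M :=
        hM.add hle (hM.zsmul_mem (hM.abs_mem hm) hq.le)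
      have hone : (1 : S.R) ≤ (p • (1 : S.R) - q • m)⁺ + q • |m| :=
        (one_le_zsmul_one hp1).trans hb
      exact h1 (hM.mem_of_nonneg_le hmem S.one_nonneg hone)
    have hqR : (0 : ℝ) < (q : ℝ) := by exact_mod_cast hq
    have : (p : ℝ) ≤ 0 := by exact_mod_cast hp
    exact div_nonpos_of_nonpos_of_nonneg this hqR.le
  have hlower : (0 : ℝ) ≤ phi M m := by
    have h0 : ratLe M 0 1 m := by
      unfold ratLe
      show ((0 : ℤ) • (1 : S.R) - (1 : ℤ) • m)⁺ ∈ M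
      have e : (0 : ℤ) • (1 : S.R) - (1 : ℤ) • m = -m := by module
      rw [e, posPart_def, ← negPart_def]
      have hneg : m⁻ ≤ |m| := by
        rw [← posPart_add_negPart m]
        exact le_add_of_nonneg_left (posPart_nonneg m)
      exact hM.mem_of_nonneg_le (hM.abs_mem hm) (negPart_nonneg m) hneg
    have := ratLe_le_phi hM h1 one_pos h0
    norm_num at this
    exact this
  linarith

/-- A character of an ℓu-ring: a unital, sup-preserving, additive, multiplicative map to `ℝ`. -/
structure IsChar (S : LuRing.{u}) (φ : S.R → ℝ) : Prop where
  map_add : ∀ x y, φ (x + y) = φ x + φ y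
  map_sup : ∀ x y, φ (x ⊔ y) = φ x ⊔ φ y
  map_one : φ 1 = 1
  map_mul : ∀ x y, φ (x * y) = φ x * φ y

section CharBasics

variable {φ : S.R → ℝ}

lemma grp_map_zero (hadd : ∀ x y, φ (x + y) = φ x + φ y) : φ 0 = 0 := by
  have := hadd 0 0
  simp only [add_zero] at this
  linarith

lemma grp_map_neg (hadd : ∀ x y, φ (x + y) = φ x + φ y) (x : S.R) : φ (-x) = -φ x := by
  have := hadd x (-x)
  rw [add_neg_cancel, grp_map_zero hadd] at this
  linarith

lemma grp_map_sub (hadd : ∀ x y, φ (x + y) = φ x + φ y) (x y : S.R) :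
    φ (x - y) = φ x - φ y := by
  rw [sub_eq_add_neg, hadd, grp_map_neg hadd]; ring

lemma grp_map_nsmul (hadd : ∀ x y, φ (x + y) = φ x + φ y) (n : ℕ) (x : S.R) :
    φ (n • x) = n * φ x := by
  induction n with
  | zero => simpa using grp_map_zero hadd
  | succ k ih => rw [succ_nsmul, hadd, ih]; push_cast; ring

lemma grp_map_zsmul (hadd : ∀ x y, φ (x + y) = φ x + φ y) (k : ℤ) (x : S.R) :
    φ (k • x) = k * φ x := by
  rcases le_or_gt 0 k with hk | hk
  · lift k to ℕ using hk
    rw [natCast_zsmul, grp_map_nsmul hadd]; push_cast; ring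
  · have hk' : 0 ≤ -k := by omega
    lift (-k) to ℕ using hk' with n hn
    have e : k • x = -((n : ℤ) • x) := by rw [← neg_zsmul]; congr 1; omega
    rw [e, grp_map_neg hadd, natCast_zsmul, grp_map_nsmul hadd]
    have : (k : ℝ) = -(n : ℝ) := by exact_mod_cast congrArg (fun z : ℤ => (z : ℝ)) (by omega : k = -(n:ℤ))
    rw [this]; ring

lemma grp_mono (hadd : ∀ x y, φ (x + y) = φ x + φ y)
    (hsup : ∀ x y, φ (x ⊔ y) = φ x ⊔ φ y) {x y : S.R} (hxy : x ≤ y) : φ x ≤ φ y := by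
  have := hsup x y
  rw [sup_eq_right.2 hxy] at this
  rw [this]
  exact le_sup_left

lemma grp_nonneg (hadd : ∀ x y, φ (x + y) = φ x + φ y)
    (hsup : ∀ x y, φ (x ⊔ y) = φ x ⊔ φ y) {x : S.R} (hx : 0 ≤ x) : 0 ≤ φ x := by
  have := grp_mono hadd hsup hx
  rwa [grp_map_zero hadd] at this

lemma grp_map_pp (hadd : ∀ x y, φ (x + y) = φ x + φ y)
    (hsup : ∀ x y, φ (x ⊔ y) = φ x ⊔ φ y) (x : S.R) : φ x⁺ = (φ x) ⊔ 0 := by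
  rw [posPart_def, hsup, grp_map_zero hadd]

lemma grp_map_np (hadd : ∀ x y, φ (x + y) = φ x + φ y)
    (hsup : ∀ x y, φ (x ⊔ y) = φ x ⊔ φ y) (x : S.R) : φ x⁻ = (-φ x) ⊔ 0 := by
  rw [negPart_def, hsup, grp_map_zero hadd, grp_map_neg hadd]

lemma grp_map_abs (hadd : ∀ x y, φ (x + y) = φ x + φ y)
    (hsup : ∀ x y, φ (x ⊔ y) = φ x ⊔ φ y) (x : S.R) : φ |x| = |φ x| := by
  rw [abs, hsup, grp_map_neg hadd, abs_eq_max_neg]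

/-- an additive, sup-preserving, unital map on an ℓu-ring is automatically
multiplicative. -/
lemma isChar_mk (hadd : ∀ x y, φ (x + y) = φ x + φ y)
    (hsup : ∀ x y, φ (x ⊔ y) = φ x ⊔ φ y) (hone : φ 1 = 1) : IsChar S φ := by
  -- kernel is multiplicative for nonnegative elements
  have hker : ∀ m a : S.R, 0 ≤ m → φ m = 0 → 0 ≤ a → φ (a * m) = 0 := by
    intro m a hm hφm ha
    obtain ⟨n, hn⟩ := S.one_strong a
    have h1 : a * m ≤ n • m := by
      have h2 : (n • (1 : S.R) - a) * m ≥ 0 :=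
        S.mul_nonneg _ _ (by rwa [sub_nonneg]) hm
      have h3 : (n • (1 : S.R) - a) * m = n • m - a * m := by
        rw [sub_mul, smul_mul_assoc, one_mul]
      rw [h3] at h2
      exact sub_nonneg.1 h2
    have h4 : 0 ≤ a * m := S.mul_nonneg _ _ ha hm
    have h5 : 0 ≤ φ (a * m) := grp_nonneg hadd hsup h4
    have h6 : φ (a * m) ≤ φ (n • m) := grp_mono hadd hsup h1
    rw [grp_map_nsmul hadd, hφm, mul_zero] at h6
    linarith
  -- rational lower and upper bounds transfer through multiplication
  have hlow : ∀ a b : S.R, 0 ≤ a → ∀ p q : ℤ, 0 < q → (p : ℝ) / q ≤ φ b →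
      (p : ℝ) / q * φ a ≤ φ (a * b) := by
    intro a b ha p q hq hpq
    set z := q • b - p • (1 : S.R) with hz
    have hqR : (0 : ℝ) < (q : ℝ) := by exact_mod_cast hq
    have hφz : 0 ≤ φ z := by
      rw [hz, grp_map_sub hadd, grp_map_zsmul hadd, grp_map_zsmul hadd, hone]
      rw [div_le_iff₀ hqR] at hpq
      nlinarith
    have hφzn : φ z⁻ = 0 := by
      rw [grp_map_np hadd hsup]
      exact sup_eq_right.2 (by linarith)
    have hazn : φ (a * z⁻) = 0 := hker z⁻ a (negPart_nonneg z) hφzn ha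
    have hazp : 0 ≤ φ (a * z⁺) :=
      grp_nonneg hadd hsup (S.mul_nonneg _ _ ha (posPart_nonneg z))
    have haz : 0 ≤ φ (a * z) := by
      have e : a * z = a * z⁺ - a * z⁻ := by
        rw [← mul_sub, posPart_sub_negPart]
      rw [e, grp_map_sub hadd, hazn]
      linarith
    have e2 : a * z = q • (a * b) - p • a := by
      rw [hz, mul_sub, mul_smul_comm, mul_smul_comm, mul_one]
    rw [e2, grp_map_sub hadd, grp_map_zsmul hadd, grp_map_zsmul hadd] at haz
    rw [div_mul_eq_mul_div, div_le_iff₀ hqR]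
    nlinarith
  have hhigh : ∀ a b : S.R, 0 ≤ a → ∀ p q : ℤ, 0 < q → φ b ≤ (p : ℝ) / q →
      φ (a * b) ≤ (p : ℝ) / q * φ a := by
    intro a b ha p q hq hpq
    set z := p • (1 : S.R) - q • b with hz
    have hqR : (0 : ℝ) < (q : ℝ) := by exact_mod_cast hq
    have hφz : 0 ≤ φ z := by
      rw [hz, grp_map_sub hadd, grp_map_zsmul hadd, grp_map_zsmul hadd, hone]
      rw [le_div_iff₀ hqR] at hpq
      nlinarith
    have hφzn : φ z⁻ = 0 := by
      rw [grp_map_np hadd hsup]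
      exact sup_eq_right.2 (by linarith)
    have hazn : φ (a * z⁻) = 0 := hker z⁻ a (negPart_nonneg z) hφzn ha
    have hazp : 0 ≤ φ (a * z⁺) :=
      grp_nonneg hadd hsup (S.mul_nonneg _ _ ha (posPart_nonneg z))
    have haz : 0 ≤ φ (a * z) := by
      have e : a * z = a * z⁺ - a * z⁻ := by
        rw [← mul_sub, posPart_sub_negPart]
      rw [e, grp_map_sub hadd, hazn]
      linarith
    have e2 : a * z = p • a - q • (a * b) := by
      rw [hz, mul_sub, mul_smul_comm, mul_smul_comm, mul_one]
    rw [e2, grp_map_sub hadd, grp_map_zsmul hadd, grp_map_zsmul hadd] at haz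
    rw [div_mul_eq_mul_div, le_div_iff₀ hqR]
    nlinarith
  -- multiplicativity for nonnegative elements
  have hposmul : ∀ a b : S.R, 0 ≤ a → φ (a * b) = φ a * φ b := by
    intro a b ha
    have hφa : 0 ≤ φ a := grp_nonneg hadd hsup ha
    have hup : ∀ ε : ℝ, 0 < ε → φ (a * b) ≤ φ a * φ b + ε := by
      intro ε hε
      set ε' := ε / (φ a + 1) with hε'
      have hε'pos : 0 < ε' := by positivity
      obtain ⟨r, hr1, hr2⟩ := exists_rat_btwn (lt_add_of_pos_right (φ b) hε'pos)
      have hrden : (0 : ℤ) < (r.den : ℤ) := by exact_mod_cast r.pos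
      have hrcast : ((r.num : ℝ)) / ((r.den : ℤ) : ℝ) = (r : ℝ) := by
        rw [Rat.cast_def]; push_cast; ring
      have hb : φ b ≤ (r.num : ℝ) / ((r.den : ℤ) : ℝ) := by rw [hrcast]; exact hr1.le
      have := hhigh a b ha r.num r.den hrden hb
      rw [hrcast] at this
      have hra : (r : ℝ) * φ a ≤ (φ b + ε') * φ a :=
        mul_le_mul_of_nonneg_right hr2.le hφa
      have hfin : ε' * φ a ≤ ε := by
        rw [hε']
        rw [div_mul_eq_mul_div, div_le_iff₀ (by positivity : (0:ℝ) < φ a + 1)]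
        nlinarith
      nlinarith
    have hdn : ∀ ε : ℝ, 0 < ε → φ a * φ b ≤ φ (a * b) + ε := by
      intro ε hε
      set ε' := ε / (φ a + 1) with hε'
      have hε'pos : 0 < ε' := by positivity
      obtain ⟨r, hr1, hr2⟩ := exists_rat_btwn (sub_lt_self (φ b) hε'pos)
      have hrden : (0 : ℤ) < (r.den : ℤ) := by exact_mod_cast r.pos
      have hrcast : ((r.num : ℝ)) / ((r.den : ℤ) : ℝ) = (r : ℝ) := by
        rw [Rat.cast_def]; push_cast; ring
      have hb : (r.num : ℝ) / ((r.den : ℤ) : ℝ) ≤ φ b := by rw [hrcast]; exact hr2.le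
      have := hlow a b ha r.num r.den hrden hb
      rw [hrcast] at this
      have hra : (φ b - ε') * φ a ≤ (r : ℝ) * φ a :=
        mul_le_mul_of_nonneg_right hr1.le hφa
      have hfin : ε' * φ a ≤ ε := by
        rw [hε']
        rw [div_mul_eq_mul_div, div_le_iff₀ (by positivity : (0:ℝ) < φ a + 1)]
        nlinarith
      nlinarith
    have h1 : φ (a * b) ≤ φ a * φ b := le_of_forall_pos_le_add hup
    have h2 : φ a * φ b ≤ φ (a * b) := le_of_forall_pos_le_add hdn
    linarith
  refine ⟨hadd, hsup, hone, ?_⟩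
  intro x y
  have ex : φ x⁺ - φ x⁻ = φ x := by
    rw [← grp_map_sub hadd, posPart_sub_negPart]
  have ey : φ y⁺ - φ y⁻ = φ y := by
    rw [← grp_map_sub hadd, posPart_sub_negPart]
  have edec : x * y = x⁺ * y⁺ - x⁻ * y⁺ - (x⁺ * y⁻ - x⁻ * y⁻) := by
    have e1 : (x⁺ - x⁻) * (y⁺ - y⁻) = x⁺ * y⁺ - x⁻ * y⁺ - (x⁺ * y⁻ - x⁻ * y⁻) := by ring
    rw [← e1, posPart_sub_negPart, posPart_sub_negPart]
  calc φ (x * y) = φ (x⁺ * y⁺) - φ (x⁻ * y⁺) - (φ (x⁺ * y⁻) - φ (x⁻ * y⁻)) := by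
        rw [edec, grp_map_sub hadd, grp_map_sub hadd, grp_map_sub hadd]
  _ = φ x⁺ * φ y⁺ - φ x⁻ * φ y⁺ - (φ x⁺ * φ y⁻ - φ x⁻ * φ y⁻) := by
        rw [hposmul _ _ (posPart_nonneg x), hposmul _ _ (negPart_nonneg x),
          hposmul _ _ (posPart_nonneg x), hposmul _ _ (negPart_nonneg x)]
  _ = (φ x⁺ - φ x⁻) * (φ y⁺ - φ y⁻) := by ring
  _ = φ x * φ y := by rw [ex, ey]

namespace IsChar

lemma map_zero (h : IsChar S φ) : φ 0 = 0 := grp_map_zero h.map_add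

lemma map_neg (h : IsChar S φ) (x : S.R) : φ (-x) = -φ x := grp_map_neg h.map_add x

lemma map_sub (h : IsChar S φ) (x y : S.R) : φ (x - y) = φ x - φ y :=
  grp_map_sub h.map_add x y

lemma map_nsmul (h : IsChar S φ) (n : ℕ) (x : S.R) : φ (n • x) = n * φ x :=
  grp_map_nsmul h.map_add n x

lemma map_zsmul (h : IsChar S φ) (k : ℤ) (x : S.R) : φ (k • x) = k * φ x :=
  grp_map_zsmul h.map_add k x

lemma mono (h : IsChar S φ) {x y : S.R} (hxy : x ≤ y) : φ x ≤ φ y :=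
  grp_mono h.map_add h.map_sup hxy

lemma nonneg (h : IsChar S φ) {x : S.R} (hx : 0 ≤ x) : 0 ≤ φ x :=
  grp_nonneg h.map_add h.map_sup hx

lemma map_abs (h : IsChar S φ) (x : S.R) : φ |x| = |φ x| :=
  grp_map_abs h.map_add h.map_sup x

lemma map_inf (h : IsChar S φ) (x y : S.R) : φ (x ⊓ y) = φ x ⊓ φ y := by
  have e1 : φ (x ⊓ y + (x ⊔ y)) = φ (x ⊓ y) + φ (x ⊔ y) := h.map_add _ _
  rw [inf_add_sup, h.map_add, h.map_sup] at e1
  have e2 : φ x ⊓ φ y + (φ x ⊔ φ y) = φ x + φ y := inf_add_sup _ _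
  have : (φ x ⊔ φ y : ℝ) = φ (x ⊔ y) := by rw [h.map_sup]
  linarith [e1, e2]

lemma bounded (h : IsChar S φ) (x : S.R) : ∃ n : ℕ, |φ x| ≤ n := by
  obtain ⟨n, hn⟩ := abs_le_unit x
  refine ⟨n, ?_⟩
  have := h.mono hn
  rw [h.map_abs, h.map_nsmul, h.map_one, mul_one] at this
  exact this

end IsChar

/-- the function `phi` associated to a prime solid set avoiding `1` is a character. -/
lemma isChar_phi (hM : IsSolid S M) (h1 : (1 : S.R) ∉ M)
    (hpr : ∀ x : S.R, x⁺ ∈ M ∨ x⁻ ∈ M) : IsChar S (phi M) :=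
  isChar_mk (phi_add hM h1 hpr) (phi_sup hM h1 hpr) (phi_one hM h1)

end CharBasics

end Phi

section Homs

variable {T : LuRing.{u}} {f : S.R → T.R}

lemma hom_map_zero (hf : LuRingHom S T f) : f 0 = 0 := by
  have h := hf.1 0 0
  simp only [add_zero] at h
  have h2 : f 0 + f 0 = f 0 + 0 := by rw [← h, add_zero]
  exact add_left_cancel h2

lemma hom_map_neg (hf : LuRingHom S T f) (x : S.R) : f (-x) = -f x := by
  have h := hf.1 x (-x)
  rw [add_neg_cancel, hom_map_zero hf] at h
  exact (neg_eq_of_add_eq_zero_right h.symm).symm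

lemma hom_mono (hf : LuRingHom S T f) {x y : S.R} (hxy : x ≤ y) : f x ≤ f y := by
  have := hf.2.2.2.1 x y
  rw [sup_eq_right.2 hxy] at this
  rw [this]
  exact le_sup_left

lemma hom_map_abs (hf : LuRingHom S T f) (x : S.R) : f |x| = |f x| := by
  rw [abs, abs, hf.2.2.2.1, hom_map_neg hf]

lemma hom_le_iff (hf : LuRingHom S T f) (hinj : Function.Injective f) {x y : S.R} :
    f x ≤ f y ↔ x ≤ y := by
  constructor
  · intro h
    have e : f (x ⊔ y) = f y := by rw [hf.2.2.2.1, sup_eq_right.2 h]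
    have := hinj e
    exact le_of_sup_eq this
  · exact hom_mono hf

lemma char_comp {T : LuRing.{u}} {φ : T.R → ℝ} (hφ : IsChar T φ) {f : S.R → T.R}
    (hf : LuRingHom S T f) : IsChar S (φ ∘ f) := by
  constructor
  · intro x y; simp only [Function.comp_apply, hf.1, hφ.map_add]
  · intro x y; simp only [Function.comp_apply, hf.2.2.2.1, hφ.map_sup]
  · simp only [Function.comp_apply, hf.2.2.1, hφ.map_one]
  · intro x y; simp only [Function.comp_apply, hf.2.1, hφ.map_mul]

end Homs

section Uniqueness

lemma char_le_of_ker {χ χ' : S.R → ℝ} (hχ : IsChar S χ) (hχ' : IsChar S χ')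
    (h : ∀ z, χ z = 0 → χ' z = 0) : ∀ z, χ' z ≤ χ z := by
  have key : ∀ z : S.R, ∀ r : ℚ, χ z < r → χ' z ≤ r := by
    intro z r hr
    set w := (r.den : ℤ) • z - r.num • (1 : S.R) with hw
    have hden : (0 : ℝ) < ((r.den : ℤ) : ℝ) := by exact_mod_cast r.pos
    have hrcast : ((r.num : ℝ)) / ((r.den : ℤ) : ℝ) = (r : ℝ) := by
      rw [Rat.cast_def]; push_cast; ring
    have hχw : χ w < 0 := by
      rw [hw, hχ.map_sub, hχ.map_zsmul, hχ.map_zsmul, hχ.map_one]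
      have : χ z < (r.num : ℝ) / ((r.den : ℤ) : ℝ) := by rw [hrcast]; exact hr
      rw [lt_div_iff₀ hden] at this
      nlinarith
    have hwp : χ w⁺ = 0 := by
      rw [grp_map_pp hχ.map_add hχ.map_sup]
      exact sup_eq_right.2 hχw.le
    have hwp' : χ' w⁺ = 0 := h _ hwp
    have hwn' : 0 ≤ χ' w⁻ := hχ'.nonneg (negPart_nonneg w)
    have hw' : χ' w ≤ 0 := by
      have e : χ' w = χ' w⁺ - χ' w⁻ := by rw [← hχ'.map_sub, posPart_sub_negPart]
      rw [e, hwp']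
      linarith
    rw [hw, hχ'.map_sub, hχ'.map_zsmul, hχ'.map_zsmul, hχ'.map_one] at hw'
    have : χ' z ≤ (r.num : ℝ) / ((r.den : ℤ) : ℝ) := by
      rw [le_div_iff₀ hden]
      nlinarith
    rwa [hrcast] at this
  intro z
  by_contra hlt
  push_neg at hlt
  obtain ⟨r, h1r, h2r⟩ := exists_rat_btwn hlt
  exact absurd (key z r h1r) (not_le.2 h2r)

lemma char_eq_of_ker {χ χ' : S.R → ℝ} (hχ : IsChar S χ) (hχ' : IsChar S χ')
    (h : ∀ z, χ z = 0 → χ' z = 0) : ∀ z, χ' z = χ z := by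
  intro z
  have h1 := char_le_of_ker hχ hχ' h z
  have h2 := char_le_of_ker hχ hχ' h (-z)
  rw [hχ.map_neg, hχ'.map_neg] at h2
  linarith

end Uniqueness

section Separation

/-- Archimedean ℓu-rings have enough characters. -/
lemma exists_char_sep (hS : S.Arch) {d : S.R} (hd : d ≠ 0) :
    ∃ φ : S.R → ℝ, IsChar S φ ∧ φ d ≠ 0 := by
  set c := |d| with hc
  have hc0 : 0 ≤ c := abs_nonneg d
  have hknot : ¬ ∀ k : ℕ, k • c ≤ 1 := by
    intro hall
    have habs : |d| ≤ 0 := hS c 1 hall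
    have := eq_zero_of_abs_nonpos habs
    exact hd this
  push_neg at hknot
  obtain ⟨k, hk⟩ := hknot
  have hk0 : 0 < k := by
    rcases Nat.eq_zero_or_pos k with rfl | h
    · exact absurd (by simpa using S.one_nonneg) hk
    · exact h
  set e := (1 : ℤ) • (1 : S.R) - (k : ℤ) • c with he
  set M₀ : Set S.R := {y | |y| ≤ 0} with hM₀
  have hM₀solid : IsSolid S M₀ := by
    constructor
    · show |(0 : S.R)| ≤ 0; simp
    · intro x y hx hy
      show |x + y| ≤ 0
      calc |x + y| ≤ |x| + |y| := abs_add_le x y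
      _ ≤ 0 + 0 := add_le_add hx hy
      _ = 0 := by ring
    · intro x y hy hxy
      exact hxy.trans hy
  have hd'M₀ : e⁻ ∉ M₀ := by
    intro hmem
    have hmem' : |e⁻| ≤ 0 := hmem
    have h0 : e⁻ = 0 := eq_zero_of_abs_nonpos hmem' 
    have h1 : 0 ≤ e := by
      have := negPart_eq_zero.1 h0
      exact this
    rw [he, sub_nonneg] at h1
    have : (k : ℤ) • c ≤ (1 : S.R) := by
      calc (k : ℤ) • c ≤ (1 : ℤ) • (1 : S.R) := h1
      _ = 1 := one_zsmul _
    rw [natCast_zsmul] at this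
    exact hk this
  obtain ⟨M, hMsolid, hM₀M, hd'M, hmax⟩ := exists_maximal_solid M₀ hM₀solid e⁻ hd'M₀
  have hpr := prime_of_maximal hMsolid e⁻ hd'M hmax
  have h1M : (1 : S.R) ∉ M := by
    intro h1m
    obtain ⟨n, hn⟩ := abs_le_unit (e⁻ : S.R)
    refine hd'M (hMsolid.solid (hMsolid.nsmul_mem h1m n) ?_)
    rw [abs_of_nonneg (nsmul_nn S.one_nonneg n), abs_of_nonneg (negPart_nonneg e)]
    exact (le_abs_self _).trans hn
  have hrat : ratLe M 1 (k : ℤ) c := by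
    rcases hpr e with h | h
    · exact h
    · exact absurd h hd'M
  have hφ : IsChar S (phi M) := isChar_phi hMsolid h1M hpr
  have hkZ : (0 : ℤ) < (k : ℤ) := by exact_mod_cast hk0
  have hlow := ratLe_le_phi hMsolid h1M hkZ hrat
  have hkR : (0 : ℝ) < ((k : ℤ) : ℝ) := by exact_mod_cast hkZ
  have hφc : 0 < phi M c := by
    have : (0 : ℝ) < (1 : ℝ) / ((k : ℤ) : ℝ) := by positivity
    calc (0 : ℝ) < (1 : ℝ) / ((k : ℤ) : ℝ) := this
    _ = ((1 : ℤ) : ℝ) / ((k : ℤ) : ℝ) := by norm_num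
    _ ≤ phi M c := hlow
  refine ⟨phi M, hφ, ?_⟩
  intro habs
  rw [hc] at hφc
  rw [hφ.map_abs, habs] at hφc
  simp at hφc

end Separation

section Extension

variable {Zr B : LuRing.{u}} {zB : Zr.R → B.R}

/-- characters extend along injective unital ℓ-ring embeddings. -/
lemma exists_char_ext (hzB : LuRingHom Zr B zB) (hiB : Function.Injective zB)
    {χ : Zr.R → ℝ} (hχ : IsChar Zr χ) :
    ∃ ψ : B.R → ℝ, IsChar B ψ ∧ ∀ z, ψ (zB z) = χ z := by
  set M₀ : Set B.R := {x | ∃ z : Zr.R, χ z = 0 ∧ |x| ≤ |zB z|} with hM₀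
  have hM₀solid : IsSolid B M₀ := by
    constructor
    · exact ⟨0, hχ.map_zero, by simp [hom_map_zero hzB]⟩
    · rintro x y ⟨z1, hz1, h1⟩ ⟨z2, hz2, h2⟩
      refine ⟨|z1| + |z2|, ?_, ?_⟩
      · rw [hχ.map_add, hχ.map_abs, hχ.map_abs, hz1, hz2]; simp
      · have hz3 : (0 : Zr.R) ≤ |z1| + |z2| := add_nonneg (abs_nonneg _) (abs_nonneg _)
        have hB3 : (0 : B.R) ≤ zB (|z1| + |z2|) := by
          have := hom_mono hzB hz3
          rwa [hom_map_zero hzB] at this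
        rw [abs_of_nonneg hB3, hzB.1]
        calc |x + y| ≤ |x| + |y| := abs_add_le x y
        _ ≤ |zB z1| + |zB z2| := add_le_add h1 h2
        _ = zB |z1| + zB |z2| := by rw [hom_map_abs hzB, hom_map_abs hzB]
    · rintro x y ⟨z1, hz1, h1⟩ hxy
      exact ⟨z1, hz1, hxy.trans h1⟩
  have h1M₀ : (1 : B.R) ∉ M₀ := by
    rintro ⟨z, hz0, hle⟩
    rw [abs_of_nonneg B.one_nonneg, ← hom_map_abs hzB] at hle
    have h1z : (1 : Zr.R) ≤ |z| := by
      rw [← hom_le_iff hzB hiB, hzB.2.2.1]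
      exact hle
    have := hχ.mono h1z
    rw [hχ.map_one, hχ.map_abs, hz0] at this
    simp only [abs_zero] at this
    linarith
  obtain ⟨M, hMsolid, hM₀M, h1M, hmax⟩ := exists_maximal_solid M₀ hM₀solid 1 h1M₀
  have hpr := prime_of_maximal hMsolid 1 h1M hmax
  have hψ : IsChar B (phi M) := isChar_phi hMsolid h1M hpr
  have hker : ∀ z, χ z = 0 → phi M (zB z) = 0 := by
    intro z hz
    exact phi_mem_zero hMsolid h1M (hM₀M ⟨z, hz, le_refl _⟩)
  exact ⟨phi M, hψ, char_eq_of_ker hχ (char_comp hψ hzB) hker⟩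

end Extension

section Amalg

variable (Z A B : LuRing.{u}) (zA : Z.R → A.R) (zB : Z.R → B.R)

/-- pairs of characters of `A` and `B` agreeing on `Z`. -/
def Omega : Type u :=
  {ω : (A.R → ℝ) × (B.R → ℝ) // IsChar A ω.1 ∧ IsChar B ω.2 ∧ ∀ z, ω.1 (zA z) = ω.2 (zB z)}

/-- the subring of bounded functions on `Omega`. -/
def bddSubring : Subring (Omega Z A B zA zB → ℝ) where
  carrier := {f | ∃ n : ℕ, ∀ ω, |f ω| ≤ n}
  zero_mem' := ⟨0, fun ω => by simp⟩
  one_mem' := ⟨1, fun ω => by simp⟩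
  add_mem' := by
    rintro f g ⟨n, hn⟩ ⟨m, hm⟩
    refine ⟨n + m, fun ω => ?_⟩
    calc |(f + g) ω| = |f ω + g ω| := rfl
    _ ≤ |f ω| + |g ω| := abs_add_le _ _
    _ ≤ (n : ℝ) + m := add_le_add (hn ω) (hm ω)
    _ = ((n + m : ℕ) : ℝ) := by push_cast; ring
  neg_mem' := by
    rintro f ⟨n, hn⟩
    exact ⟨n, fun ω => by simpa using hn ω⟩
  mul_mem' := by
    rintro f g ⟨n, hn⟩ ⟨m, hm⟩
    refine ⟨n * m, fun ω => ?_⟩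
    calc |(f * g) ω| = |f ω| * |g ω| := abs_mul _ _
    _ ≤ (n : ℝ) * m :=
        mul_le_mul (hn ω) (hm ω) (abs_nonneg _) (by positivity)
    _ = ((n * m : ℕ) : ℝ) := by push_cast; ring

/-- the lattice structure on the bounded subring, computed pointwise. -/
noncomputable instance : Lattice ↥(bddSubring Z A B zA zB) :=
  Subtype.lattice
    (fun f g hf hg => by
      obtain ⟨n, hn⟩ := hf
      obtain ⟨m, hm⟩ := hg
      refine ⟨n + m, fun ω => ?_⟩
      calc |(f ⊔ g) ω| = |max (f ω) (g ω)| := rfl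
      _ ≤ max |f ω| |g ω| := abs_max_le_max_abs_abs
      _ ≤ (n : ℝ) + m := by
          have h1 := hn ω; have h2 := hm ω
          have := max_le (h1.trans (le_add_of_nonneg_right (by positivity)))
            (h2.trans (le_add_of_nonneg_left (by positivity)))
          exact this
      _ = ((n + m : ℕ) : ℝ) := by push_cast; ring)
    (fun f g hf hg => by
      obtain ⟨n, hn⟩ := hf
      obtain ⟨m, hm⟩ := hg
      refine ⟨n + m, fun ω => ?_⟩
      calc |(f ⊓ g) ω| = |min (f ω) (g ω)| := rfl
      _ ≤ max |f ω| |g ω| := abs_min_le_max_abs_abs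
      _ ≤ (n : ℝ) + m := by
          have h1 := hn ω; have h2 := hm ω
          have := max_le (h1.trans (le_add_of_nonneg_right (by positivity)))
            (h2.trans (le_add_of_nonneg_left (by positivity)))
          exact this
      _ = ((n + m : ℕ) : ℝ) := by push_cast; ring)

lemma ER_le_def (x y : ↥(bddSubring Z A B zA zB)) : x ≤ y ↔ x.1 ≤ y.1 := Iff.rfl

lemma ER_coe_add (x y : ↥(bddSubring Z A B zA zB)) : (↑(x + y) : Omega Z A B zA zB → ℝ) = ↑x + ↑y := rfl

lemma ER_coe_sup (x y : ↥(bddSubring Z A B zA zB)) : (↑(x ⊔ y) : Omega Z A B zA zB → ℝ) = ↑x ⊔ ↑y := rfl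

lemma ER_coe_inf (x y : ↥(bddSubring Z A B zA zB)) : (↑(x ⊓ y) : Omega Z A B zA zB → ℝ) = ↑x ⊓ ↑y := rfl

lemma ER_coe_nsmul (n : ℕ) (x : ↥(bddSubring Z A B zA zB)) :
    (↑(n • x) : Omega Z A B zA zB → ℝ) = n • (↑x : Omega Z A B zA zB → ℝ) := by
  induction n with
  | zero => simp
  | succ k ih => rw [succ_nsmul, succ_nsmul, ← ih]; rfl

lemma real_fring {a b c : ℝ} (h : a ⊓ b = 0) (hc : 0 ≤ c) : (c * a) ⊓ b = 0 := by
  have ha : 0 ≤ a := by rw [← h]; exact inf_le_left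
  have hb : 0 ≤ b := by rw [← h]; exact inf_le_right
  rcases le_total a b with hab | hab
  · have h1 : a = 0 := by rw [← h, inf_eq_left.2 hab]
    rw [h1, mul_zero]
    exact inf_eq_left.2 hb
  · have h1 : b = 0 := by rw [← h, inf_eq_right.2 hab]
    rw [h1]
    exact inf_eq_right.2 (mul_nonneg hc ha)

/-- the amalgam: the ℓu-ring of bounded real functions on `Omega`. -/
noncomputable def Ering : LuRing.{u} where
  R := ↥(bddSubring Z A B zA zB)
  add_le_add := by
    intro a b c h
    rw [ER_le_def] at *
    intro ω
    exact add_le_add_right (h ω) _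
  one_nonneg := by
    rw [ER_le_def]
    intro ω
    exact zero_le_one
  one_strong := by
    intro x
    obtain ⟨n, hn⟩ := x.2
    refine ⟨n, ?_⟩
    rw [ER_le_def, ER_coe_nsmul]
    intro ω
    calc x.1 ω ≤ |x.1 ω| := le_abs_self _
    _ ≤ n := hn ω
    _ = (n • (1 : Omega Z A B zA zB → ℝ)) ω := by simp
  mul_nonneg := by
    intro a b ha hb
    rw [ER_le_def] at *
    intro ω
    exact mul_nonneg (ha ω) (hb ω)
  f_ring := by
    intro x y z hxy hz
    have hxy' : ∀ ω, (x.1 ω) ⊓ (y.1 ω) = 0 := by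
      intro ω
      have := congrArg Subtype.val hxy
      exact congrFun this ω
    rw [ER_le_def] at hz
    apply Subtype.ext
    funext ω
    exact real_fring (hxy' ω) (hz ω)

lemma Ering_arch : (Ering Z A B zA zB).Arch := by
  intro x y h
  refine (ER_le_def Z A B zA zB _ _).2 ?_
  intro ω
  by_contra hcon
  push_neg at hcon
  have hx : (0:ℝ) < x.1 ω := hcon
  obtain ⟨n, hn⟩ := y.2
  obtain ⟨m, hm⟩ := Archimedean.arch (n : ℝ) hx
  have h2 := h (m + 1)
  replace h2 := (ER_le_def Z A B zA zB _ _).1 h2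
  replace h2 := (ER_coe_nsmul Z A B zA zB (m + 1) x).symm.le.trans h2
  have h3 := h2 ω
  have h4 : ((m + 1) • (x.1 : Omega Z A B zA zB → ℝ)) ω = (m + 1 : ℕ) * x.1 ω := by
    simp [nsmul_eq_mul]
  rw [h4] at h3
  have h5 : y.1 ω ≤ n := (le_abs_self _).trans (hn ω)
  have h6 : (n : ℝ) ≤ m * x.1 ω := by simpa [nsmul_eq_mul] using hm
  push_cast at h3
  nlinarith

end Amalg

section Maps

variable {Z A B : LuRing.{u}} {zA : Z.R → A.R} {zB : Z.R → B.R}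

/-- evaluation of characters of `A` on the amalgam space. -/
noncomputable def fAmap (a : A.R) : (Ering Z A B zA zB).R :=
  ⟨fun ω => ω.1.1 a, by
    obtain ⟨n, hn⟩ := abs_le_unit a
    refine ⟨n, fun ω => ?_⟩
    calc |ω.1.1 a| = ω.1.1 |a| := (ω.2.1.map_abs a).symm
    _ ≤ ω.1.1 (n • 1) := ω.2.1.mono hn
    _ = n * ω.1.1 1 := ω.2.1.map_nsmul n 1
    _ = n := by rw [ω.2.1.map_one, mul_one]⟩

/-- evaluation of characters of `B` on the amalgam space. -/
noncomputable def fBmap (b : B.R) : (Ering Z A B zA zB).R :=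
  ⟨fun ω => ω.1.2 b, by
    obtain ⟨n, hn⟩ := abs_le_unit b
    refine ⟨n, fun ω => ?_⟩
    calc |ω.1.2 b| = ω.1.2 |b| := (ω.2.2.1.map_abs b).symm
    _ ≤ ω.1.2 (n • 1) := ω.2.2.1.mono hn
    _ = n * ω.1.2 1 := ω.2.2.1.map_nsmul n 1
    _ = n := by rw [ω.2.2.1.map_one, mul_one]⟩

lemma fAmap_hom : LuRingHom A (Ering Z A B zA zB) fAmap :=
  ⟨fun x y => Subtype.ext (funext fun ω => ω.2.1.map_add x y),
   fun x y => Subtype.ext (funext fun ω => ω.2.1.map_mul x y),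
   Subtype.ext (funext fun ω => ω.2.1.map_one),
   fun x y => Subtype.ext (funext fun ω => ω.2.1.map_sup x y),
   fun x y => Subtype.ext (funext fun ω => ω.2.1.map_inf x y)⟩

lemma fBmap_hom : LuRingHom B (Ering Z A B zA zB) fBmap :=
  ⟨fun x y => Subtype.ext (funext fun ω => ω.2.2.1.map_add x y),
   fun x y => Subtype.ext (funext fun ω => ω.2.2.1.map_mul x y),
   Subtype.ext (funext fun ω => ω.2.2.1.map_one),
   fun x y => Subtype.ext (funext fun ω => ω.2.2.1.map_sup x y),
   fun x y => Subtype.ext (funext fun ω => ω.2.2.1.map_inf x y)⟩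

lemma fAmap_inj (hA : A.Arch) (hzA : LuRingHom Z A zA) (hzB : LuRingHom Z B zB)
    (hiB : Function.Injective zB) :
    Function.Injective (fAmap : A.R → (Ering Z A B zA zB).R) := by
  intro a a' h
  by_contra hne
  have hd : a - a' ≠ 0 := sub_ne_zero.2 hne
  obtain ⟨φ, hφ, hφd⟩ := exists_char_sep hA hd
  have hχ : IsChar Z (φ ∘ zA) := char_comp hφ hzA
  obtain ⟨ψ, hψ, hval⟩ := exists_char_ext hzB hiB hχ
  have hω : IsChar A (φ, ψ).1 ∧ IsChar B (φ, ψ).2 ∧ ∀ z, (φ, ψ).1 (zA z) = (φ, ψ).2 (zB z) :=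
    ⟨hφ, hψ, fun z => (hval z).symm⟩
  set ω : Omega Z A B zA zB := ⟨(φ, ψ), hω⟩
  have heval : φ a = φ a' := congrFun (congrArg Subtype.val h) ω
  have : φ (a - a') = 0 := by rw [hφ.map_sub, heval, sub_self]
  exact hφd this

lemma fBmap_inj (hB : B.Arch) (hzA : LuRingHom Z A zA) (hzB : LuRingHom Z B zB)
    (hiA : Function.Injective zA) :
    Function.Injective (fBmap : B.R → (Ering Z A B zA zB).R) := by
  intro b b' h
  by_contra hne
  have hd : b - b' ≠ 0 := sub_ne_zero.2 hne
  obtain ⟨ψ, hψ, hψd⟩ := exists_char_sep hB hd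
  have hχ : IsChar Z (ψ ∘ zB) := char_comp hψ hzB
  obtain ⟨φ, hφ, hval⟩ := exists_char_ext hzA hiA hχ
  have hω : IsChar A (φ, ψ).1 ∧ IsChar B (φ, ψ).2 ∧ ∀ z, (φ, ψ).1 (zA z) = (φ, ψ).2 (zB z) :=
    ⟨hφ, hψ, fun z => hval z⟩
  set ω : Omega Z A B zA zB := ⟨(φ, ψ), hω⟩
  have heval : ψ b = ψ b' := congrFun (congrArg Subtype.val h) ω
  have : ψ (b - b') = 0 := by rw [hψ.map_sub, heval, sub_self]
  exact hψd this

lemma famap_compat :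
    (fAmap : A.R → (Ering Z A B zA zB).R) ∘ zA = (fBmap : B.R → (Ering Z A B zA zB).R) ∘ zB := by
  funext z
  apply Subtype.ext
  funext ω
  exact ω.2.2.2 z

end Maps

end S15

/-- unital Archimedean ℓu-rings have the amalgamation property. -/
theorem stmt15 (Z A B : LuRing.{u}) (hZ : Z.Arch) (hA : A.Arch) (hB : B.Arch)
    (zA : Z.R → A.R) (zB : Z.R → B.R)
    (hzA : LuRingHom Z A zA) (hzB : LuRingHom Z B zB)
    (hiA : Function.Injective zA) (hiB : Function.Injective zB) :
    ∃ (E : LuRing.{u}) (fA : A.R → E.R) (fB : B.R → E.R),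
      E.Arch ∧ LuRingHom A E fA ∧ LuRingHom B E fB ∧
      Function.Injective fA ∧ Function.Injective fB ∧ fA ∘ zA = fB ∘ zB := by
  exact ⟨S15.Ering Z A B zA zB, S15.fAmap, S15.fBmap, S15.Ering_arch Z A B zA zB,
    S15.fAmap_hom, S15.fBmap_hom, S15.fAmap_inj hA hzA hzB hiB,
    S15.fBmap_inj hB hzA hzB hiA, S15.famap_compat⟩
end
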